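/- arXiv:2003.08198 — 4 statements merged into one kernel-verified Lean document; each statement's English description precedes it below -/
import Mathlib

section
/- For any function u in L^1_loc(R^d), any exponents q>0 and p>0, and any points x,y in R^d with 2|x-y| ≤ r < 1/10, one has min(1,|u(y)-u(x)|^q) ≤ C(p,q,d) · log(1/r)^{-p} · (G(r,x)+G(r,y)), where G(r,z) := ∫_{r≤|h|≤r^{1/2}} min(1,|u(z+h)-u(z)|^q) / (|h|^d · log(1/|h|)^{1-p}) dh. -/
open MeasureTheory Real Set Metric


-- numeric facts
lemma num1 : (100:ℝ) * Real.log 2 ≤ 31 * Real.log 10 := by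
  have h2 : Real.log (2^(100:ℕ)) ≤ Real.log (10^(31:ℕ)) := by
    apply Real.log_le_log (by positivity)
    norm_num
  rwa [Real.log_pow, Real.log_pow] at h2 <;> push_cast at * <;> linarith

lemma num2 : (40:ℝ) * Real.log 2 ≤ 13 * Real.log 10 := by
  have h2 : Real.log (2^(40:ℕ)) ≤ Real.log (10^(13:ℕ)) := by
    apply Real.log_le_log (by positivity)
    norm_num
  rwa [Real.log_pow, Real.log_pow] at h2 <;> push_cast at * <;> linarith

-- min chaining lemma
lemma min_chain {q a b Δ : ℝ} (hq : 0 < q) (ha : 0 ≤ a) (hb : 0 ≤ b) (hΔ : 0 ≤ Δ)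
    (h : Δ ≤ a + b) :
    min 1 (Δ ^ q) ≤ 2 ^ q * (min 1 (a ^ q) + min 1 (b ^ q)) := by
  set m := max a b with hm
  have hm0 : 0 ≤ m := le_max_of_le_left ha
  have h2 : Δ ≤ 2 * m := by
    have : a ≤ m := le_max_left a b
    have : b ≤ m := le_max_right a b
    nlinarith [le_max_left a b]
  have h3 : Δ ^ q ≤ (2*m) ^ q := Real.rpow_le_rpow hΔ h2 hq.le
  have h4 : (2*m) ^ q = 2 ^ q * m ^ q := Real.mul_rpow (by norm_num) hm0
  have h5 : min 1 (Δ ^ q) ≤ min 1 (2 ^ q * m ^ q) := by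
    apply min_le_min le_rfl; rw [← h4]; exact h3
  have h2q : (1:ℝ) ≤ 2 ^ q := Real.one_le_rpow (by norm_num) hq.le
  have h6 : min 1 (2 ^ q * m ^ q) ≤ 2 ^ q * min 1 (m ^ q) := by
    rcases le_total (m ^ q) 1 with h | h
    · rw [min_eq_right h]
      exact min_le_right _ _
    · rw [min_eq_left]
      · rw [min_eq_left h]; linarith
      · nlinarith [Real.rpow_nonneg hm0 q]
  have h7 : min 1 (m ^ q) ≤ min 1 (a ^ q) + min 1 (b ^ q) := by
    have hna : 0 ≤ min 1 (a ^ q) := le_min (by norm_num) (Real.rpow_nonneg ha q)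
    have hnb : 0 ≤ min 1 (b ^ q) := le_min (by norm_num) (Real.rpow_nonneg hb q)
    rcases max_choice a b with h | h <;> rw [hm, h] <;> linarith
  calc min 1 (Δ ^ q) ≤ 2 ^ q * min 1 (m ^ q) := h5.trans h6
    _ ≤ 2 ^ q * (min 1 (a ^ q) + min 1 (b ^ q)) := by
        apply mul_le_mul_of_nonneg_left h7 (by positivity)

-- rpow comparison
lemma rpow_compare {a b t : ℝ} (ha : 0 < a) (h1 : b ≤ 2*a) (h2 : a ≤ 2*b) :
    b ^ t ≤ (2 ^ t + 2 ^ (-t)) * a ^ t := by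
  have hb : 0 < b := by linarith
  rcases le_or_gt 0 t with ht | ht
  · have : b ^ t ≤ (2*a) ^ t := Real.rpow_le_rpow hb.le h1 ht
    rw [Real.mul_rpow (by norm_num) ha.le] at this
    nlinarith [Real.rpow_pos_of_pos ha t, Real.rpow_pos_of_pos (show (0:ℝ)<2 by norm_num) (-t)]
  · have hmono : b ^ t ≤ (a/2) ^ t := by
      apply Real.rpow_le_rpow_of_nonpos (by linarith) (by linarith) ht.le
    have : (a/2 : ℝ) ^ t = 2 ^ (-t) * a ^ t := by
      rw [div_eq_mul_inv, Real.mul_rpow ha.le (by norm_num), Real.inv_rpow (by norm_num),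
        ← Real.rpow_neg (by norm_num), mul_comm]
    rw [this] at hmono
    nlinarith [Real.rpow_pos_of_pos ha t, Real.rpow_pos_of_pos (show (0:ℝ)<2 by norm_num) t]

lemma ftc_log (p : ℝ) (hp : 0 < p) {a b : ℝ} (ha : 0 < a) (hab : a ≤ b) (hb : b < 1) :
    ∫ y in a..b, (-Real.log y) ^ (p-1) / y
      = ((-Real.log a) ^ p - (-Real.log b) ^ p) / p := by
  have key : ∀ y ∈ Set.uIcc a b, HasDerivAt (fun t => -((-Real.log t) ^ p) / p)
      ((-Real.log y) ^ (p-1) / y) y := by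
    intro y hy
    rw [Set.uIcc_of_le hab] at hy
    have hy0 : 0 < y := lt_of_lt_of_le ha hy.1
    have hy1 : y < 1 := lt_of_le_of_lt hy.2 hb
    have hlog : 0 < -Real.log y := by
      have := Real.log_neg hy0 hy1; linarith
    have h1 : HasDerivAt (fun t : ℝ => -Real.log t) (-y⁻¹) y :=
      (Real.hasDerivAt_log hy0.ne').neg
    have h2 : HasDerivAt (fun s : ℝ => s ^ p) (p * (-Real.log y) ^ (p-1)) (-Real.log y) :=
      Real.hasDerivAt_rpow_const (Or.inl hlog.ne')
    have h3 := h2.comp y h1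
    have h4 := (h3.div_const p).neg
    have hfun : (fun t => -((-Real.log t) ^ p) / p)
        = -fun x => ((fun s : ℝ => s ^ p) ∘ fun t => -Real.log t) x / p := by
      funext t; simp [Function.comp, neg_div]
    rw [hfun]
    refine h4.congr_deriv ?_
    · have heq : -(p * (-Real.log y) ^ (p-1) * -y⁻¹ / p) = (p/p) * ((-Real.log y) ^ (p-1) * y⁻¹) := by
        ring
      rw [heq, div_self hp.ne', one_mul, div_eq_mul_inv]
  have hcont : ContinuousOn (fun y => (-Real.log y) ^ (p-1) / y) (Set.uIcc a b) := by
    rw [Set.uIcc_of_le hab]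
    apply ContinuousOn.div
    · apply ContinuousOn.rpow_const
      · exact (Real.continuousOn_log.mono (fun y hy => by
          have : 0 < y := lt_of_lt_of_le ha hy.1
          exact this.ne')).neg
      · intro y hy
        left
        have hy0 : 0 < y := lt_of_lt_of_le ha hy.1
        have hy1 : y < 1 := lt_of_le_of_lt hy.2 hb
        have := Real.log_neg hy0 hy1; intro hc; rw [← hc] at this; simp at this; linarith
    · exact continuousOn_id
    · intro y hy; exact (lt_of_lt_of_le ha hy.1).ne'
  rw [intervalIntegral.integral_eq_sub_of_hasDerivAt key (hcont.intervalIntegrable)]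
  field_simp
  ring

lemma polar_int (d : ℕ) (hd : 0 < d) (p : ℝ) (hp : 0 < p)
    [Nontrivial (EuclideanSpace ℝ (Fin d))]
    {a b : ℝ} (ha : 0 < a) (hab : a ≤ b) (hb : b < 1) :
    ∫ h in {h : EuclideanSpace ℝ (Fin d) | a ≤ ‖h‖ ∧ ‖h‖ ≤ b},
        (‖h‖ ^ (d:ℝ) * (Real.log (1/‖h‖)) ^ (1-p))⁻¹
      = (d : ℝ) * (volume (ball (0:EuclideanSpace ℝ (Fin d)) 1)).toReal *
          (((-Real.log a) ^ p - (-Real.log b) ^ p) / p) := by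
  have hdim : Module.finrank ℝ (EuclideanSpace ℝ (Fin d)) = d := finrank_euclideanSpace_fin
  set φ : ℝ → ℝ := fun y => (y ^ (d:ℝ) * (Real.log (1/y)) ^ (1-p))⁻¹ with hφ
  set g : ℝ → ℝ := Set.indicator (Icc a b) φ with hg
  have hmeas : MeasurableSet {h : EuclideanSpace ℝ (Fin d) | a ≤ ‖h‖ ∧ ‖h‖ ≤ b} := by
    have : {h : EuclideanSpace ℝ (Fin d) | a ≤ ‖h‖ ∧ ‖h‖ ≤ b}
        = (fun h : EuclideanSpace ℝ (Fin d) => ‖h‖) ⁻¹' (Icc a b) := rfl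
    rw [this]; exact measurable_norm measurableSet_Icc
  have h1 : (∫ h in {h : EuclideanSpace ℝ (Fin d) | a ≤ ‖h‖ ∧ ‖h‖ ≤ b},
        (‖h‖ ^ (d:ℝ) * (Real.log (1/‖h‖)) ^ (1-p))⁻¹)
      = ∫ h : EuclideanSpace ℝ (Fin d), g ‖h‖ := by
    rw [← integral_indicator hmeas]
    congr 1
  rw [h1, MeasureTheory.integral_fun_norm_addHaar volume g]
  have h2 : (∫ y in Ioi (0:ℝ), y ^ (Module.finrank ℝ (EuclideanSpace ℝ (Fin d)) - 1) • g y)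
      = ((-Real.log a) ^ p - (-Real.log b) ^ p) / p := by
    have e1 : ∀ y : ℝ, y ^ (Module.finrank ℝ (EuclideanSpace ℝ (Fin d)) - 1) • g y
        = Set.indicator (Icc a b) (fun y => y ^ (d - 1) * φ y) y := by
      intro y
      by_cases hy : y ∈ Icc a b
      · rw [hg, Set.indicator_of_mem hy, Set.indicator_of_mem hy, smul_eq_mul, hdim]
      · rw [hg, Set.indicator_of_notMem hy, Set.indicator_of_notMem hy, smul_zero]
    have hpt : Set.EqOn (fun y : ℝ => y ^ (d - 1) * φ y)
        (fun y : ℝ => (-Real.log y) ^ (p-1) / y) (Icc a b) := by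
      intro y hy
      have hy0 : 0 < y := lt_of_lt_of_le ha hy.1
      have hy1 : y < 1 := lt_of_le_of_lt hy.2 hb
      have hlog : 0 < -Real.log y := by have := Real.log_neg hy0 hy1; linarith
      have hl1 : Real.log (1/y) = -Real.log y := by rw [one_div, Real.log_inv]
      have hrp : y ^ (d:ℝ) = y ^ (d:ℕ) := Real.rpow_natCast y d
      have hinv : ((-Real.log y) ^ (1-p))⁻¹ = (-Real.log y) ^ (p-1) := by
        rw [← Real.rpow_neg hlog.le, neg_sub]
      have hpow : (y:ℝ) ^ (d:ℕ) = y ^ (d-1) * y := by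
        rw [← pow_succ, Nat.sub_add_cancel hd]
      rw [hφ]
      simp only []
      rw [hl1, hrp, mul_inv, hinv, hpow]
      have hyne : (y:ℝ) ^ (d-1) ≠ 0 := pow_ne_zero _ hy0.ne'
      field_simp
    simp_rw [e1]
    rw [setIntegral_indicator measurableSet_Icc]
    have hss : Ioi (0:ℝ) ∩ Icc a b = Icc a b :=
      Set.inter_eq_self_of_subset_right (fun y hy => Set.mem_Ioi.2 (lt_of_lt_of_le ha hy.1))
    rw [hss, setIntegral_congr_fun measurableSet_Icc hpt,
      MeasureTheory.integral_Icc_eq_integral_Ioc, ← intervalIntegral.integral_of_le hab]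
    exact ftc_log p hp ha hab hb
  rw [h2, hdim, nsmul_eq_mul, smul_eq_mul, measureReal_def]
  ring

-- helpers for numeric rpow bounds
lemma rpow_le_of_pow {x c : ℝ} {n m : ℕ} (hx : 0 < x) (hc : 0 < c) (hm : 0 < m)
    (h : x ^ n ≤ c ^ m) : x ^ ((n:ℝ)/m) ≤ c := by
  have h1 : (n:ℝ) * Real.log x ≤ (m:ℝ) * Real.log c := by
    have := Real.log_le_log (by positivity) h
    rwa [Real.log_pow, Real.log_pow] at this
  have hm' : (0:ℝ) < m := by positivity
  have h2 : Real.log x * ((n:ℝ)/m) ≤ Real.log c := by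
    rw [show Real.log x * ((n:ℝ)/m) = ((n:ℝ) * Real.log x)/m by ring]
    rw [div_le_iff₀ hm']
    linarith
  calc x ^ ((n:ℝ)/m) = Real.exp (Real.log x * ((n:ℝ)/m)) := Real.rpow_def_of_pos hx _
    _ ≤ Real.exp (Real.log c) := Real.exp_le_exp.2 h2
    _ = c := Real.exp_log hc

lemma le_rpow_of_pow {x c : ℝ} {n m : ℕ} (hx : 0 < x) (hc : 0 < c) (hm : 0 < m)
    (h : c ^ m ≤ x ^ n) : c ≤ x ^ ((n:ℝ)/m) := by
  have h1 : (m:ℝ) * Real.log c ≤ (n:ℝ) * Real.log x := by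
    have := Real.log_le_log (by positivity) h
    rwa [Real.log_pow, Real.log_pow] at this
  have hm' : (0:ℝ) < m := by positivity
  have h2 : Real.log c ≤ Real.log x * ((n:ℝ)/m) := by
    rw [show Real.log x * ((n:ℝ)/m) = ((n:ℝ) * Real.log x)/m by ring]
    rw [le_div_iff₀ hm']
    linarith
  calc c = Real.exp (Real.log c) := (Real.exp_log hc).symm
    _ ≤ Real.exp (Real.log x * ((n:ℝ)/m)) := Real.exp_le_exp.2 h2
    _ = x ^ ((n:ℝ)/m) := (Real.rpow_def_of_pos hx _).symm

-- bounded integrable helper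
lemma integrableOn_of_bdd {d : ℕ} {f : EuclideanSpace ℝ (Fin d) → ℝ}
    {S : Set (EuclideanSpace ℝ (Fin d))} {M : ℝ}
    (hS : MeasurableSet S) (hSb : S ⊆ Metric.closedBall 0 1)
    (hf : AEMeasurable f volume) (hbd : ∀ h ∈ S, |f h| ≤ M) :
    IntegrableOn f S volume := by
  apply Measure.integrableOn_of_bounded (M := M)
  · exact ne_of_lt (lt_of_le_of_lt (measure_mono hSb) measure_closedBall_lt_top)
  · exact hf.aestronglyMeasurable
  · rw [ae_restrict_iff' hS]
    exact ae_of_all _ (fun h hh => by rw [Real.norm_eq_abs]; exact hbd h hh)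

set_option maxHeartbeats 2000000

/-- Lusin-type log estimate (Proposition on log Lusin-Lipschitz). -/
theorem stmt0 (d : ℕ) (p q : ℝ) (hp : 0 < p) (hq : 0 < q) :
    ∃ C : ℝ, 0 < C ∧
      ∀ (u : EuclideanSpace ℝ (Fin d) → ℝ), LocallyIntegrable u volume →
      ∀ (x y : EuclideanSpace ℝ (Fin d)) (r : ℝ),
        2 * dist x y ≤ r → r < 1/10 →
        min 1 (|u y - u x| ^ q) ≤
          C * (Real.log (1/r)) ^ (-p) *
            ((∫ h in {h : EuclideanSpace ℝ (Fin d) | r ≤ ‖h‖ ∧ ‖h‖ ≤ r ^ ((1:ℝ)/2)},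
                min 1 (|u (x + h) - u x| ^ q) / (‖h‖ ^ (d:ℝ) * (Real.log (1/‖h‖)) ^ (1 - p))) +
             (∫ h in {h : EuclideanSpace ℝ (Fin d) | r ≤ ‖h‖ ∧ ‖h‖ ≤ r ^ ((1:ℝ)/2)},
                min 1 (|u (y + h) - u y| ^ q) / (‖h‖ ^ (d:ℝ) * (Real.log (1/‖h‖)) ^ (1 - p)))) := by
  classical
  set cball : ℝ := (volume (Metric.ball (0 : EuclideanSpace ℝ (Fin d)) 1)).toReal with hcball
  set C1 : ℝ := 2 ^ (d:ℝ) * (2 ^ (1-p) + 2 ^ (-(1-p))) with hC1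
  have hC1pos : 0 < C1 := by positivity
  set c' : ℝ := ((d:ℝ) * cball) * (((69:ℝ)/100) ^ p - ((13:ℝ)/20) ^ p) / p with hc'
  set K : ℝ := 2 ^ q * (1 + C1) with hK
  have hKpos : 0 < K := by positivity
  set C : ℝ := max 1 (K / c') with hC
  refine ⟨C, lt_of_lt_of_le one_pos (le_max_left _ _), ?_⟩
  intro u hu x y r hr hr10
  -- nonnegativity of denominators on the annulus
  have hr0 : 0 ≤ r := le_trans (by positivity) hr
  -- nonnegativity of the two integrals, valid for all r ∈ [0, 1/10)
  have hSnonneg : ∀ z : EuclideanSpace ℝ (Fin d),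
      0 ≤ ∫ h in {h : EuclideanSpace ℝ (Fin d) | r ≤ ‖h‖ ∧ ‖h‖ ≤ r ^ ((1:ℝ)/2)},
        min 1 (|u (z + h) - u z| ^ q) / (‖h‖ ^ (d:ℝ) * (Real.log (1/‖h‖)) ^ (1 - p)) := by
    intro z
    apply setIntegral_nonneg
    · exact measurable_norm measurableSet_Icc (t := Set.Icc r (r ^ ((1:ℝ)/2)))
    · intro h hh
      rcases eq_or_lt_of_le hr0 with hr0' | hr0'
      · have hn : ‖h‖ ≤ 0 := by
          have := hh.2
          rw [← hr0', Real.zero_rpow (by norm_num : (1:ℝ)/2 ≠ 0)] at this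
          exact this
        have h0 : h = 0 := norm_le_zero_iff.1 hn
        have : u (z + h) - u z = 0 := by rw [h0, add_zero, sub_self]
        rw [this, abs_zero, Real.zero_rpow hq.ne', min_eq_right (by norm_num)]
        simp
      · have hnum : 0 ≤ min 1 (|u (z + h) - u z| ^ q) :=
          le_min (by norm_num) (Real.rpow_nonneg (abs_nonneg _) q)
        have hn1 : 0 < ‖h‖ := lt_of_lt_of_le hr0' hh.1
        have hn2 : ‖h‖ < 1 := lt_of_le_of_lt hh.2
          (Real.rpow_lt_one hr0 (by linarith) (by norm_num))
        have hlog : 0 < Real.log (1/‖h‖) := by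
          rw [one_div, Real.log_inv]
          have := Real.log_neg hn1 hn2
          linarith
        have hden : 0 < ‖h‖ ^ (d:ℝ) * (Real.log (1/‖h‖)) ^ (1 - p) :=
          mul_pos (Real.rpow_pos_of_pos hn1 _) (Real.rpow_pos_of_pos hlog _)
        positivity
  have hLnn : 0 ≤ Real.log (1/r) := by
    rcases eq_or_lt_of_le hr0 with h | h
    · rw [← h]; norm_num
    · apply Real.log_nonneg
      rw [le_div_iff₀ h]
      linarith
  by_cases hxy : x = y
  · subst hxy
    have hzero : min 1 (|u x - u x| ^ q) = 0 := by
      rw [sub_self, abs_zero, Real.zero_rpow hq.ne', min_eq_right (by norm_num)]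
    rw [hzero]
    have := hSnonneg x
    have hCnn : (0:ℝ) ≤ C := le_trans (by norm_num) (le_max_left 1 _)
    have hLp : 0 ≤ (Real.log (1/r)) ^ (-p) := Real.rpow_nonneg hLnn _
    positivity
  -- main case
  push_neg at hxy
  have hrpos : 0 < r := by
    have hd0 : 0 < dist x y := dist_pos.2 hxy
    linarith
  have hr1 : r < 1 := by linarith
  haveI hnt : Nontrivial (EuclideanSpace ℝ (Fin d)) := nontrivial_of_ne x y hxy
  have hdpos : 0 < d := by
    have h1 : 0 < Module.finrank ℝ (EuclideanSpace ℝ (Fin d)) := Module.finrank_pos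
    rwa [finrank_euclideanSpace_fin] at h1
  set L : ℝ := Real.log (1/r) with hL
  have hLlog : L = -Real.log r := by rw [hL, one_div, Real.log_inv]
  have h10r : (10:ℝ) ≤ 1/r := by rw [le_div_iff₀ hrpos]; linarith
  have hL10 : Real.log 10 ≤ L := by rw [hL]; exact Real.log_le_log (by norm_num) h10r
  have hlog2pos : (0:ℝ) < Real.log 2 := Real.log_pos (by norm_num)
  have hlog10pos : (0:ℝ) < Real.log 10 := Real.log_pos (by norm_num)
  have hLpos : 0 < L := lt_of_lt_of_le hlog10pos hL10
  have hlog2L : Real.log 2 ≤ (31/100) * L := by nlinarith [num1]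
  have h2l2 : 2 * Real.log 2 ≤ (13/20) * L := by nlinarith [num2]
  set v : EuclideanSpace ℝ (Fin d) := x - y with hv
  have hvr : ‖v‖ ≤ r/2 := by
    have hdn : dist x y = ‖x - y‖ := dist_eq_norm x y
    rw [hv]; rw [hdn] at hr; linarith
  set A : Set (EuclideanSpace ℝ (Fin d)) := {h | r ≤ ‖h‖ ∧ ‖h‖ ≤ r ^ ((1:ℝ)/2)} with hA
  set A0 : Set (EuclideanSpace ℝ (Fin d)) :=
    {h : EuclideanSpace ℝ (Fin d) | 2*r ≤ ‖h‖ ∧ ‖h‖ ≤ r ^ ((13:ℝ)/20)} with hA0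
  have hAmeas : MeasurableSet A := measurable_norm measurableSet_Icc
    (t := Set.Icc r (r ^ ((1:ℝ)/2)))
  have hA0meas : MeasurableSet A0 := measurable_norm measurableSet_Icc
    (t := Set.Icc (2*r) (r ^ ((13:ℝ)/20)))
  -- numeric rpow facts
  have hrb1 : r ^ ((13:ℝ)/20) < 1 := Real.rpow_lt_one hr0 hr1 (by norm_num)
  have hrhalf1 : r ^ ((1:ℝ)/2) < 1 := Real.rpow_lt_one hr0 hr1 (by norm_num)
  have h2rb : 2*r ≤ r ^ ((13:ℝ)/20) := by
    have h2pow : (2:ℝ) ≤ (1/r) ^ ((7:ℝ)/20) := by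
      have hnum : (2:ℝ) ^ (20:ℕ) ≤ (1/r) ^ (7:ℕ) :=
        le_trans (by norm_num) (pow_le_pow_left₀ (by norm_num) h10r 7)
      have := le_rpow_of_pow (x := 1/r) (c := 2) (n := 7) (m := 20)
        (by positivity) (by norm_num) (by norm_num) hnum
      push_cast at this
      exact this
    have e1 : r * (1/r) ^ ((7:ℝ)/20) = r ^ ((13:ℝ)/20) := by
      rw [one_div, Real.inv_rpow hrpos.le, ← Real.rpow_neg hrpos.le]
      rw [show r * r ^ (-((7:ℝ)/20)) = r ^ (1 + -((7:ℝ)/20)) by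
        rw [Real.rpow_add hrpos, Real.rpow_one]]
      norm_num
    calc 2*r = r * 2 := by ring
      _ ≤ r * (1/r) ^ ((7:ℝ)/20) := mul_le_mul_of_nonneg_left h2pow hrpos.le
      _ = r ^ ((13:ℝ)/20) := e1
  have hA0subA : A0 ⊆ A := by
    intro h hh
    exact ⟨le_trans (by linarith) hh.1,
      le_trans hh.2 (Real.rpow_le_rpow_of_exponent_ge hrpos hr1.le (by norm_num))⟩
  have hAsubBall : A ⊆ Metric.closedBall 0 1 := by
    intro h hh
    rw [Metric.mem_closedBall, dist_zero_right]
    exact le_trans hh.2 hrhalf1.le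
  have hshiftub : r ^ ((13:ℝ)/20) + r/2 ≤ r ^ ((1:ℝ)/2) := by
    have e2 : r ^ ((13:ℝ)/20) = r ^ ((1:ℝ)/2) * r ^ ((3:ℝ)/20) := by
      rw [← Real.rpow_add hrpos]; norm_num
    have e3 : r = r ^ ((1:ℝ)/2) * r ^ ((1:ℝ)/2) := by
      rw [← Real.rpow_add hrpos]; norm_num
    have hb1 : r ^ ((3:ℝ)/20) ≤ 4/5 := by
      have step : ((1:ℝ)/10) ^ ((3:ℝ)/20) ≤ 4/5 := by
        have := rpow_le_of_pow (x := (1:ℝ)/10) (c := (4:ℝ)/5) (n := 3) (m := 20)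
          (by norm_num) (by norm_num) (by norm_num) (by norm_num)
        push_cast at this
        exact this
      exact le_trans (Real.rpow_le_rpow hr0 hr10.le (by norm_num)) step
    have hb2 : r ^ ((1:ℝ)/2) ≤ 2/5 := by
      have step : ((1:ℝ)/10) ^ ((1:ℝ)/2) ≤ 2/5 := by
        have := rpow_le_of_pow (x := (1:ℝ)/10) (c := (2:ℝ)/5) (n := 1) (m := 2)
          (by norm_num) (by norm_num) (by norm_num) (by norm_num)
        push_cast at this
        exact this
      exact le_trans (Real.rpow_le_rpow hr0 hr10.le (by norm_num)) step
    have hrhpos : 0 < r ^ ((1:ℝ)/2) := Real.rpow_pos_of_pos hrpos _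
    nlinarith [e2, e3, hb1, hb2, hrhpos]
  -- denominator lower bound on A
  set dlt : ℝ := r ^ (d:ℝ) * min ((L/2) ^ (1-p)) (L ^ (1-p)) with hdlt
  have hdltpos : 0 < dlt := mul_pos (Real.rpow_pos_of_pos hrpos _)
    (lt_min (Real.rpow_pos_of_pos (by linarith) _) (Real.rpow_pos_of_pos hLpos _))
  have hdenA : ∀ h ∈ A, dlt ≤ ‖h‖ ^ (d:ℝ) * (Real.log (1/‖h‖)) ^ (1-p) ∧
      0 < ‖h‖ ^ (d:ℝ) * (Real.log (1/‖h‖)) ^ (1-p) := by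
    intro h hh
    obtain ⟨h1, h2⟩ := hh
    have hn0 : 0 < ‖h‖ := lt_of_lt_of_le hrpos h1
    have hn1 : ‖h‖ < 1 := lt_of_le_of_lt h2 hrhalf1
    have ha : Real.log (1/‖h‖) = -Real.log ‖h‖ := by rw [one_div, Real.log_inv]
    have haU : Real.log (1/‖h‖) ≤ L := by
      rw [ha, hLlog]
      have := Real.log_le_log hrpos h1
      linarith
    have haL : L/2 ≤ Real.log (1/‖h‖) := by
      rw [ha]
      have hll := Real.log_le_log hn0 h2
      rw [Real.log_rpow hrpos] at hll
      rw [hLlog] at *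
      linarith
    have hapos : 0 < Real.log (1/‖h‖) := lt_of_lt_of_le (by linarith) haL
    refine ⟨?_, mul_pos (Real.rpow_pos_of_pos hn0 _) (Real.rpow_pos_of_pos hapos _)⟩
    apply mul_le_mul
    · exact Real.rpow_le_rpow hr0 h1 (Nat.cast_nonneg d)
    · rcases le_or_gt 0 (1-p) with hsign | hsign
      · exact le_trans (min_le_left _ _) (Real.rpow_le_rpow (by linarith) haL hsign)
      · exact le_trans (min_le_right _ _)
          (Real.rpow_le_rpow_of_nonpos hapos haU hsign.le)
    · exact le_min (Real.rpow_nonneg (by linarith) _) (Real.rpow_nonneg hLpos.le _)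
    · exact Real.rpow_nonneg (norm_nonneg h) _
  -- shift facts
  have hshift : ∀ h ∈ A0, (h + v) ∈ A ∧
      (‖h‖ ^ (d:ℝ) * (Real.log (1/‖h‖)) ^ (1-p))⁻¹ ≤
        C1 * (‖h+v‖ ^ (d:ℝ) * (Real.log (1/‖h+v‖)) ^ (1-p))⁻¹ := by
    intro h hh
    obtain ⟨h1, h2⟩ := hh
    have hn0 : 0 < ‖h‖ := lt_of_lt_of_le (by linarith) h1
    have ht1 : ‖h‖ ≤ ‖h+v‖ + ‖v‖ := by
      calc ‖h‖ = ‖(h+v) - v‖ := by rw [add_sub_cancel_right]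
        _ ≤ ‖h+v‖ + ‖v‖ := norm_sub_le _ _
    have hx1 : ‖h‖ - r/2 ≤ ‖h + v‖ := by linarith
    have hx2 : ‖h + v‖ ≤ ‖h‖ + r/2 := le_trans (norm_add_le h v) (by linarith)
    have hq1 : r/2 ≤ ‖h‖/4 := by linarith
    have hlow : (3/4) * ‖h‖ ≤ ‖h+v‖ := by linarith
    have hup : ‖h+v‖ ≤ (5/4) * ‖h‖ := by linarith
    have hmemA : (h+v) ∈ A := by
      constructor
      · linarith
      · linarith [hshiftub]
    have hn0' : 0 < ‖h+v‖ := by linarith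
    have hhub : ‖h‖ < 1 := lt_of_le_of_lt h2 hrb1
    have hvub : ‖h+v‖ < 1 := lt_of_le_of_lt hmemA.2 hrhalf1
    have hae : Real.log (1/‖h‖) = -Real.log ‖h‖ := by rw [one_div, Real.log_inv]
    have hbe : Real.log (1/‖h+v‖) = -Real.log ‖h+v‖ := by rw [one_div, Real.log_inv]
    have hage : (13:ℝ)/20 * L ≤ Real.log (1/‖h‖) := by
      rw [hae]
      have hll := Real.log_le_log hn0 h2
      rw [Real.log_rpow hrpos] at hll
      rw [hLlog] at *
      linarith
    have ha2 : 2*Real.log 2 ≤ Real.log (1/‖h‖) := le_trans (by linarith [h2l2]) hage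
    have hapos : 0 < Real.log (1/‖h‖) := by linarith
    have hb_ub : Real.log (1/‖h+v‖) ≤ Real.log (1/‖h‖) + Real.log 2 := by
      rw [hae, hbe]
      have hgle : ‖h‖/2 ≤ ‖h+v‖ := by linarith
      have hll := Real.log_le_log (by positivity : (0:ℝ) < ‖h‖/2) hgle
      rw [Real.log_div hn0.ne' two_ne_zero] at hll
      linarith
    have hb_lb : Real.log (1/‖h‖) - Real.log 2 ≤ Real.log (1/‖h+v‖) := by
      rw [hae, hbe]
      have hub2 : ‖h+v‖ ≤ 2*‖h‖ := by linarith
      have hll := Real.log_le_log hn0' hub2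
      rw [Real.log_mul two_ne_zero hn0.ne'] at hll
      linarith
    have hba1 : Real.log (1/‖h+v‖) ≤ 2*Real.log (1/‖h‖) := by linarith
    have hba2 : Real.log (1/‖h‖) ≤ 2*Real.log (1/‖h+v‖) := by linarith
    have hbp : (Real.log (1/‖h+v‖)) ^ (1-p) ≤
        (2^(1-p) + 2^(-(1-p))) * (Real.log (1/‖h‖)) ^ (1-p) :=
      rpow_compare hapos hba1 hba2
    have hnorm_p : ‖h+v‖ ^ (d:ℝ) ≤ 2^(d:ℝ) * ‖h‖^(d:ℝ) := by
      calc ‖h+v‖ ^ (d:ℝ) ≤ (2*‖h‖) ^ (d:ℝ) :=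
            Real.rpow_le_rpow (norm_nonneg _) (by linarith) (Nat.cast_nonneg d)
        _ = 2^(d:ℝ) * ‖h‖^(d:ℝ) := Real.mul_rpow (by norm_num) (norm_nonneg _)
    have hbpos : 0 < Real.log (1/‖h+v‖) := by linarith
    have hdenh : 0 < ‖h‖^(d:ℝ) * (Real.log (1/‖h‖))^(1-p) :=
      mul_pos (Real.rpow_pos_of_pos hn0 _) (Real.rpow_pos_of_pos hapos _)
    have hdenv : 0 < ‖h+v‖^(d:ℝ) * (Real.log (1/‖h+v‖))^(1-p) :=
      mul_pos (Real.rpow_pos_of_pos hn0' _) (Real.rpow_pos_of_pos hbpos _)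
    refine ⟨hmemA, ?_⟩
    have key : ‖h+v‖^(d:ℝ) * (Real.log (1/‖h+v‖))^(1-p) ≤
        C1 * (‖h‖^(d:ℝ) * (Real.log (1/‖h‖))^(1-p)) := by
      calc ‖h+v‖^(d:ℝ) * (Real.log (1/‖h+v‖))^(1-p)
          ≤ (2^(d:ℝ) * ‖h‖^(d:ℝ)) * ((2^(1-p) + 2^(-(1-p))) * (Real.log (1/‖h‖))^(1-p)) := by
            apply mul_le_mul hnorm_p hbp (Real.rpow_nonneg hbpos.le _) (by positivity)
        _ = C1 * (‖h‖^(d:ℝ) * (Real.log (1/‖h‖))^(1-p)) := by rw [hC1]; ring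
    rw [inv_eq_one_div, inv_eq_one_div, mul_one_div, div_le_div_iff₀ hdenh hdenv, one_mul]
    exact key
  -- measurability
  have humeas : AEMeasurable u volume := hu.aestronglyMeasurable.aemeasurable
  have hnum_meas : ∀ z : EuclideanSpace ℝ (Fin d),
      AEMeasurable (fun h => min 1 (|u (z + h) - u z| ^ q)) volume := by
    intro z
    have h1 : AEMeasurable (fun h : EuclideanSpace ℝ (Fin d) => u (z + h)) volume := by
      have hmp : MeasurePreserving (fun h : EuclideanSpace ℝ (Fin d) => z + h)
          volume volume := measurePreserving_add_left volume z
      exact humeas.comp_quasiMeasurePreserving hmp.quasiMeasurePreserving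
    have h2 : AEMeasurable (fun h => |u (z + h) - u z|) volume :=
      continuous_abs.measurable.comp_aemeasurable (h1.sub aemeasurable_const)
    have h3 : AEMeasurable (fun h => |u (z + h) - u z| ^ q) volume :=
      h2.pow aemeasurable_const
    exact aemeasurable_const.min h3
  have hden_meas : Measurable (fun h : EuclideanSpace ℝ (Fin d) =>
      (‖h‖ ^ (d:ℝ) * (Real.log (1/‖h‖)) ^ (1-p))) := by
    apply Measurable.mul
    · exact measurable_norm.pow measurable_const
    · exact (Real.measurable_log.comp (measurable_const.div measurable_norm)).pow
        measurable_const
  -- integrability statements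
  have hnum01 : ∀ (z : EuclideanSpace ℝ (Fin d)) (w : EuclideanSpace ℝ (Fin d)),
      0 ≤ min 1 (|u (z + w) - u z| ^ q) ∧ min 1 (|u (z + w) - u z| ^ q) ≤ 1 :=
    fun z w => ⟨le_min (by norm_num) (Real.rpow_nonneg (abs_nonneg _) q), min_le_left _ _⟩
  have hIntx : IntegrableOn (fun h => min 1 (|u (x + h) - u x| ^ q) /
      (‖h‖ ^ (d:ℝ) * (Real.log (1/‖h‖)) ^ (1 - p))) A volume := by
    apply integrableOn_of_bdd hAmeas hAsubBall ((hnum_meas x).div hden_meas.aemeasurable)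
    intro h hh
    obtain ⟨hdle, hdpos2⟩ := hdenA h hh
    show |min 1 (|u (x + h) - u x| ^ q) / (‖h‖ ^ (d:ℝ) * (Real.log (1/‖h‖)) ^ (1 - p))| ≤ _
    rw [abs_of_nonneg (div_nonneg (hnum01 x h).1 hdpos2.le)]
    calc _ ≤ 1 / dlt := div_le_div₀ (by norm_num) (hnum01 x h).2 hdltpos hdle
      _ = dlt⁻¹ := one_div dlt
  have hInty : IntegrableOn (fun h => min 1 (|u (y + h) - u y| ^ q) /
      (‖h‖ ^ (d:ℝ) * (Real.log (1/‖h‖)) ^ (1 - p))) A volume := by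
    apply integrableOn_of_bdd hAmeas hAsubBall ((hnum_meas y).div hden_meas.aemeasurable)
    intro h hh
    obtain ⟨hdle, hdpos2⟩ := hdenA h hh
    show |min 1 (|u (y + h) - u y| ^ q) / (‖h‖ ^ (d:ℝ) * (Real.log (1/‖h‖)) ^ (1 - p))| ≤ _
    rw [abs_of_nonneg (div_nonneg (hnum01 y h).1 hdpos2.le)]
    calc _ ≤ 1 / dlt := div_le_div₀ (by norm_num) (hnum01 y h).2 hdltpos hdle
      _ = dlt⁻¹ := one_div dlt
  have hIntshift : IntegrableOn (fun h => min 1 (|u (y + (h+v)) - u y| ^ q) /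
      (‖h‖ ^ (d:ℝ) * (Real.log (1/‖h‖)) ^ (1 - p))) A0 volume := by
    apply integrableOn_of_bdd hA0meas (hA0subA.trans hAsubBall)
    · apply AEMeasurable.div _ hden_meas.aemeasurable
      exact (hnum_meas y).comp_quasiMeasurePreserving
        (measurePreserving_add_right volume v).quasiMeasurePreserving
    · intro h hh
      obtain ⟨hdle, hdpos2⟩ := hdenA h (hA0subA hh)
      rw [abs_of_nonneg (div_nonneg (hnum01 y (h+v)).1 hdpos2.le)]
      calc _ ≤ 1 / dlt := div_le_div₀ (by norm_num) (hnum01 y (h+v)).2 hdltpos hdle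
        _ = dlt⁻¹ := one_div dlt
  have hIntx0 : IntegrableOn (fun h => min 1 (|u (x + h) - u x| ^ q) /
      (‖h‖ ^ (d:ℝ) * (Real.log (1/‖h‖)) ^ (1 - p))) A0 volume :=
    hIntx.mono_set hA0subA
  have hIntw : IntegrableOn (fun h : EuclideanSpace ℝ (Fin d) =>
      (‖h‖ ^ (d:ℝ) * (Real.log (1/‖h‖)) ^ (1-p))⁻¹) A0 volume := by
    apply integrableOn_of_bdd hA0meas (hA0subA.trans hAsubBall) hden_meas.aemeasurable.inv
    intro h hh
    obtain ⟨hdle, hdpos2⟩ := hdenA h (hA0subA hh)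
    show |(‖h‖ ^ (d:ℝ) * (Real.log (1/‖h‖)) ^ (1-p))⁻¹| ≤ _
    rw [abs_of_nonneg (inv_nonneg.2 hdpos2.le)]
    exact inv_anti₀ hdltpos hdle
  -- indicator function G
  set G : EuclideanSpace ℝ (Fin d) → ℝ := A.indicator (fun h =>
    min 1 (|u (y + h) - u y| ^ q) / (‖h‖ ^ (d:ℝ) * (Real.log (1/‖h‖)) ^ (1 - p))) with hG
  have hGint : Integrable G volume := (integrable_indicator_iff hAmeas).2 hInty
  have hGnonneg : ∀ h, 0 ≤ G h := by
    intro h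
    rw [hG]
    apply Set.indicator_nonneg
    intro h' hh'
    exact div_nonneg (hnum01 y h').1 (hdenA h' hh').2.le
  have hGshift_int : Integrable (fun h => G (h + v)) volume :=
    ((measurePreserving_add_right (volume : Measure (EuclideanSpace ℝ (Fin d))) v).integrable_comp
      hGint.aestronglyMeasurable).2 hGint
  -- polar lower bound
  have hI0 : (∫ h in A0, (‖h‖ ^ (d:ℝ) * (Real.log (1/‖h‖)) ^ (1-p))⁻¹)
      = (d:ℝ) * cball *
        (((-Real.log (2*r)) ^ p - (-Real.log (r ^ ((13:ℝ)/20))) ^ p) / p) := by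
    rw [hA0, hcball]
    exact polar_int d hdpos p hp (by linarith) h2rb hrb1
  have hc'pos : 0 < c' := by
    have hcballpos : 0 < cball := by
      rw [hcball]
      exact ENNReal.toReal_pos (measure_ball_pos volume 0 one_pos).ne'
        measure_ball_lt_top.ne
    have hlt : ((13:ℝ)/20)^p < ((69:ℝ)/100)^p :=
      Real.rpow_lt_rpow (by norm_num) (by norm_num) hp
    rw [hc']
    apply div_pos (mul_pos (mul_pos (by exact_mod_cast hdpos) hcballpos) (by linarith)) hp
  have hI0lb : c' * L ^ p ≤ ∫ h in A0, (‖h‖ ^ (d:ℝ) * (Real.log (1/‖h‖)) ^ (1-p))⁻¹ := by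
    rw [hI0]
    have e1 : -Real.log (2*r) = L - Real.log 2 := by
      rw [Real.log_mul two_ne_zero hrpos.ne', hLlog]; ring
    have e2 : -Real.log (r ^ ((13:ℝ)/20)) = (13/20) * L := by
      rw [Real.log_rpow hrpos, hLlog]; ring
    rw [e1, e2]
    have h69 : ((69:ℝ)/100) * L ≤ L - Real.log 2 := by nlinarith [hlog2L]
    have t1 : ((69:ℝ)/100) ^ p * L ^ p ≤ (L - Real.log 2) ^ p := by
      rw [← Real.mul_rpow (by norm_num) hLpos.le]
      exact Real.rpow_le_rpow (by positivity) h69 hp.le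
    have t2 : ((13:ℝ)/20 * L) ^ p = ((13:ℝ)/20)^p * L ^ p :=
      Real.mul_rpow (by norm_num) hLpos.le
    have hdc : 0 ≤ (d:ℝ) * cball := by
      have : (0:ℝ) ≤ cball := ENNReal.toReal_nonneg
      positivity
    have expand : c' * L ^ p =
        (d:ℝ) * cball * ((((69:ℝ)/100)^p * L^p - ((13:ℝ)/20)^p * L^p)/p) := by
      rw [hc']; field_simp
    rw [expand, t2]
    apply mul_le_mul_of_nonneg_left _ hdc
    apply (div_le_div_iff_of_pos_right hp).2
    linarith [t1]
  -- nonnegativity of the two main integrals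
  have hSxnn := hSnonneg x
  have hSynn := hSnonneg y
  -- the main chain
  set m : ℝ := min 1 (|u y - u x| ^ q) with hm
  have hmnn : 0 ≤ m := le_min (by norm_num) (Real.rpow_nonneg (abs_nonneg _) q)
  have step0 : m * (∫ h in A0, (‖h‖ ^ (d:ℝ) * (Real.log (1/‖h‖)) ^ (1-p))⁻¹)
      = ∫ h in A0, m * (‖h‖ ^ (d:ℝ) * (Real.log (1/‖h‖)) ^ (1-p))⁻¹ :=
    (integral_const_mul m _).symm
  have step1 : (∫ h in A0, m * (‖h‖ ^ (d:ℝ) * (Real.log (1/‖h‖)) ^ (1-p))⁻¹)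
      ≤ ∫ h in A0, 2^q * (min 1 (|u (x + h) - u x| ^ q) /
          (‖h‖ ^ (d:ℝ) * (Real.log (1/‖h‖)) ^ (1 - p)) +
        min 1 (|u (y + (h+v)) - u y| ^ q) /
          (‖h‖ ^ (d:ℝ) * (Real.log (1/‖h‖)) ^ (1 - p))) := by
    apply setIntegral_mono_on (hIntw.const_mul m)
      ((hIntx0.add hIntshift).const_mul (2^q)) hA0meas
    intro h hh
    obtain ⟨hdle, hdpos2⟩ := hdenA h (hA0subA hh)
    have hpoint : y + (h + v) = x + h := by rw [hv]; abel
    have habs : |u y - u x| ≤ |u (x+h) - u x| + |u (y + (h+v)) - u y| := by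
      rw [hpoint]
      have hid : u y - u x = (u (x+h) - u x) - (u (x+h) - u y) := by ring
      rw [hid, sub_eq_add_neg]
      calc |(u (x+h) - u x) + -(u (x+h) - u y)| ≤ |u (x+h) - u x| + |-(u (x+h) - u y)| :=
            abs_add_le _ _
        _ = |u (x+h) - u x| + |u (x+h) - u y| := by rw [abs_neg]
    have hkey := min_chain hq (abs_nonneg (u (x+h) - u x))
      (abs_nonneg (u (y + (h+v)) - u y)) (abs_nonneg (u y - u x)) habs
    have hwnn : 0 ≤ (‖h‖ ^ (d:ℝ) * (Real.log (1/‖h‖)) ^ (1-p))⁻¹ := inv_nonneg.2 hdpos2.le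
    calc m * (‖h‖ ^ (d:ℝ) * (Real.log (1/‖h‖)) ^ (1-p))⁻¹
        ≤ (2^q * (min 1 (|u (x+h) - u x| ^ q) + min 1 (|u (y + (h+v)) - u y| ^ q))) *
            (‖h‖ ^ (d:ℝ) * (Real.log (1/‖h‖)) ^ (1-p))⁻¹ := by
          apply mul_le_mul_of_nonneg_right _ hwnn
          rw [hm]
          exact hkey
      _ = 2^q * (min 1 (|u (x + h) - u x| ^ q) /
            (‖h‖ ^ (d:ℝ) * (Real.log (1/‖h‖)) ^ (1 - p)) +
          min 1 (|u (y + (h+v)) - u y| ^ q) /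
            (‖h‖ ^ (d:ℝ) * (Real.log (1/‖h‖)) ^ (1 - p))) := by
          rw [div_eq_mul_inv, div_eq_mul_inv]; ring
  have step2 : (∫ h in A0, 2^q * (min 1 (|u (x + h) - u x| ^ q) /
          (‖h‖ ^ (d:ℝ) * (Real.log (1/‖h‖)) ^ (1 - p)) +
        min 1 (|u (y + (h+v)) - u y| ^ q) /
          (‖h‖ ^ (d:ℝ) * (Real.log (1/‖h‖)) ^ (1 - p))))
      = 2^q * ((∫ h in A0, min 1 (|u (x + h) - u x| ^ q) /
          (‖h‖ ^ (d:ℝ) * (Real.log (1/‖h‖)) ^ (1 - p))) +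
        ∫ h in A0, min 1 (|u (y + (h+v)) - u y| ^ q) /
          (‖h‖ ^ (d:ℝ) * (Real.log (1/‖h‖)) ^ (1 - p))) := by
    rw [integral_const_mul, integral_add hIntx0 hIntshift]
  have hnonnegA : ∀ᵐ (h : EuclideanSpace ℝ (Fin d)) ∂(volume.restrict A),
      0 ≤ min 1 (|u (x + h) - u x| ^ q) /
        (‖h‖ ^ (d:ℝ) * (Real.log (1/‖h‖)) ^ (1 - p)) := by
    rw [ae_restrict_iff' hAmeas]
    exact ae_of_all _ (fun h hh => div_nonneg (hnum01 x h).1 (hdenA h hh).2.le)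
  have step3 : (∫ h in A0, min 1 (|u (x + h) - u x| ^ q) /
        (‖h‖ ^ (d:ℝ) * (Real.log (1/‖h‖)) ^ (1 - p)))
      ≤ ∫ h in A, min 1 (|u (x + h) - u x| ^ q) /
        (‖h‖ ^ (d:ℝ) * (Real.log (1/‖h‖)) ^ (1 - p)) :=
    setIntegral_mono_set hIntx hnonnegA hA0subA.eventuallyLE
  have step4a : (∫ h in A0, min 1 (|u (y + (h+v)) - u y| ^ q) /
        (‖h‖ ^ (d:ℝ) * (Real.log (1/‖h‖)) ^ (1 - p)))
      ≤ ∫ h in A0, C1 * G (h+v) := by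
    apply setIntegral_mono_on hIntshift
      (Integrable.integrableOn (hGshift_int.const_mul C1)) hA0meas
    intro h hh
    obtain ⟨hmem, hcomp⟩ := hshift h hh
    have hGval : G (h+v) = min 1 (|u (y + (h+v)) - u y| ^ q) /
        (‖h+v‖ ^ (d:ℝ) * (Real.log (1/‖h+v‖)) ^ (1 - p)) := by
      rw [hG, Set.indicator_of_mem hmem]
    rw [hGval, div_eq_mul_inv, div_eq_mul_inv]
    calc min 1 (|u (y + (h+v)) - u y| ^ q) * (‖h‖ ^ (d:ℝ) * (Real.log (1/‖h‖)) ^ (1-p))⁻¹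
        ≤ min 1 (|u (y + (h+v)) - u y| ^ q) *
            (C1 * (‖h+v‖ ^ (d:ℝ) * (Real.log (1/‖h+v‖)) ^ (1-p))⁻¹) :=
          mul_le_mul_of_nonneg_left hcomp (hnum01 y (h+v)).1
      _ = C1 * (min 1 (|u (y + (h+v)) - u y| ^ q) *
            (‖h+v‖ ^ (d:ℝ) * (Real.log (1/‖h+v‖)) ^ (1-p))⁻¹) := by ring
  have step4b : (∫ h in A0, C1 * G (h+v))
      ≤ C1 * ∫ h in A, min 1 (|u (y + h) - u y| ^ q) /
          (‖h‖ ^ (d:ℝ) * (Real.log (1/‖h‖)) ^ (1 - p)) := by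
    rw [integral_const_mul]
    apply mul_le_mul_of_nonneg_left _ hC1pos.le
    calc (∫ h in A0, G (h+v)) ≤ ∫ h, G (h+v) :=
          setIntegral_le_integral hGshift_int (ae_of_all _ (fun h => hGnonneg _))
      _ = ∫ h, G h := integral_add_right_eq_self G v
      _ = ∫ h in A, min 1 (|u (y + h) - u y| ^ q) /
          (‖h‖ ^ (d:ℝ) * (Real.log (1/‖h‖)) ^ (1 - p)) := by
        rw [hG, integral_indicator hAmeas]
  -- combine everything
  have htotal : m * (c' * L ^ p) ≤ K *
      ((∫ h in A, min 1 (|u (x + h) - u x| ^ q) /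
          (‖h‖ ^ (d:ℝ) * (Real.log (1/‖h‖)) ^ (1 - p))) +
        ∫ h in A, min 1 (|u (y + h) - u y| ^ q) /
          (‖h‖ ^ (d:ℝ) * (Real.log (1/‖h‖)) ^ (1 - p))) := by
    have c1 : m * (c' * L ^ p) ≤ m * ∫ h in A0,
        (‖h‖ ^ (d:ℝ) * (Real.log (1/‖h‖)) ^ (1-p))⁻¹ :=
      mul_le_mul_of_nonneg_left hI0lb hmnn
    have c2 := step0 ▸ c1
    have c3 := c2.trans (step1.trans_eq step2)
    have c4 := c3.trans (mul_le_mul_of_nonneg_left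
      (add_le_add step3 (step4a.trans step4b))
      (Real.rpow_nonneg (by norm_num : (0:ℝ) ≤ 2) q))
    rw [hK]
    set Sx := ∫ h in A, min 1 (|u (x + h) - u x| ^ q) /
        (‖h‖ ^ (d:ℝ) * (Real.log (1/‖h‖)) ^ (1 - p)) with hSx
    set Sy := ∫ h in A, min 1 (|u (y + h) - u y| ^ q) /
        (‖h‖ ^ (d:ℝ) * (Real.log (1/‖h‖)) ^ (1 - p)) with hSy
    have h2qpos : (0:ℝ) < 2^q := Real.rpow_pos_of_pos (by norm_num) q
    have hfact : Sx + C1 * Sy ≤ (1 + C1) * (Sx + Sy) := by nlinarith only [hSxnn, hSynn, hC1pos]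
    calc m * (c' * L ^ p) ≤ 2^q * (Sx + C1 * Sy) := c4
      _ ≤ 2^q * ((1+C1) * (Sx+Sy)) := mul_le_mul_of_nonneg_left hfact h2qpos.le
      _ = 2^q * (1+C1) * (Sx+Sy) := by ring
  -- conclude
  have hLppos : 0 < L ^ p := Real.rpow_pos_of_pos hLpos p
  set Sx := ∫ h in A, min 1 (|u (x + h) - u x| ^ q) /
      (‖h‖ ^ (d:ℝ) * (Real.log (1/‖h‖)) ^ (1 - p)) with hSx
  set Sy := ∫ h in A, min 1 (|u (y + h) - u y| ^ q) /
      (‖h‖ ^ (d:ℝ) * (Real.log (1/‖h‖)) ^ (1 - p)) with hSy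
  have h1 : m ≤ (K * (Sx+Sy)) / (c' * L^p) := by
    rw [le_div_iff₀ (by positivity)]
    exact htotal
  have h2 : (K * (Sx+Sy)) / (c' * L^p) = (K / c') * ((L^p)⁻¹ * (Sx+Sy)) := by
    rw [div_eq_mul_inv, div_eq_mul_inv, mul_inv]
    ring
  have h3 : (K/c') * ((L^p)⁻¹ * (Sx+Sy)) ≤ C * ((L^p)⁻¹ * (Sx+Sy)) := by
    apply mul_le_mul_of_nonneg_right (le_max_right 1 _)
    have hTnn : 0 ≤ Sx + Sy := add_nonneg hSxnn hSynn
    positivity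
  have h4 : C * L ^ (-p) * (Sx + Sy) = C * ((L^p)⁻¹ * (Sx+Sy)) := by
    rw [Real.rpow_neg hLpos.le]; ring
  rw [h4]
  exact (h1.trans_eq h2).trans h3
end

section
/- For any u in L^1_loc(R^d), any q>0, any points x,y ∈ R^d, and any s ≥ 2|x-y|, one has min(1,|u(x)-u(y)|^q) ≤ C(d,q) · ( ⨍_{B_{3s}(0)\B_s(0)} min(1,|u(x+h)-u(x)|^q) dh + ⨍_{B_{3s}(0)\B_s(0)} min(1,|u(y+h)-u(y)|^q) dh ), where ⨍ denotes the average integral. -/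
open MeasureTheory Real Metric Set

private lemma min_one_tri (q : ℝ) (hq : 0 < q) (a b : ℝ) :
    min 1 (|a + b| ^ q) ≤ 2 ^ q * (min 1 (|a| ^ q) + min 1 (|b| ^ q)) := by
  have hm0 : 0 ≤ max |a| |b| := le_trans (abs_nonneg a) (le_max_left _ _)
  have h1 : |a + b| ≤ 2 * max |a| |b| := by
    have h2 : |a| ≤ max |a| |b| := le_max_left _ _
    have h3 : |b| ≤ max |a| |b| := le_max_right _ _
    have := abs_add_le a b
    linarith
  have step1 : min 1 (|a + b| ^ q) ≤ min 1 ((2 * max |a| |b|) ^ q) :=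
    min_le_min le_rfl (Real.rpow_le_rpow (abs_nonneg _) h1 hq.le)
  have h2q : (2 * max |a| |b|) ^ q = 2 ^ q * max |a| |b| ^ q :=
    Real.mul_rpow (by norm_num) hm0
  have h2q1 : (1:ℝ) ≤ 2 ^ q := Real.one_le_rpow one_le_two hq.le
  have step2 : min 1 ((2 * max |a| |b|) ^ q) ≤ 2 ^ q * min 1 (max |a| |b| ^ q) := by
    rcases le_total (max |a| |b| ^ q) 1 with h | h
    · rw [min_eq_right h, h2q]
      exact min_le_right _ _
    · rw [min_eq_left h]
      calc min 1 ((2 * max |a| |b|) ^ q) ≤ 1 := min_le_left _ _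
        _ ≤ 2 ^ q * 1 := by linarith
  have h0a : 0 ≤ min 1 (|a| ^ q) := le_min zero_le_one (Real.rpow_nonneg (abs_nonneg a) q)
  have h0b : 0 ≤ min 1 (|b| ^ q) := le_min zero_le_one (Real.rpow_nonneg (abs_nonneg b) q)
  have step3 : min 1 (max |a| |b| ^ q) ≤ min 1 (|a| ^ q) + min 1 (|b| ^ q) := by
    rcases max_cases |a| |b| with ⟨h, _⟩ | ⟨h, _⟩ <;> rw [h] <;> linarith
  calc min 1 (|a + b| ^ q) ≤ 2 ^ q * min 1 (max |a| |b| ^ q) := step1.trans step2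
    _ ≤ 2 ^ q * (min 1 (|a| ^ q) + min 1 (|b| ^ q)) :=
        mul_le_mul_of_nonneg_left step3 (by linarith)

/-- averaging lemma over annuli. -/
theorem stmt1 (d : ℕ) (q : ℝ) (hq : 0 < q) :
    ∃ C : ℝ, 0 < C ∧
      ∀ (u : EuclideanSpace ℝ (Fin d) → ℝ), LocallyIntegrable u volume →
      ∀ (x y : EuclideanSpace ℝ (Fin d)) (s : ℝ), 2 * dist x y ≤ s →
        min 1 (|u x - u y| ^ q) ≤
          C * ((⨍ h in {h : EuclideanSpace ℝ (Fin d) | s ≤ ‖h‖ ∧ ‖h‖ ≤ 3 * s},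
                  min 1 (|u (x + h) - u x| ^ q)) +
               (⨍ h in {h : EuclideanSpace ℝ (Fin d) | s ≤ ‖h‖ ∧ ‖h‖ ≤ 3 * s},
                  min 1 (|u (y + h) - u y| ^ q))) := by
  classical
  set D : ℝ := (2:ℝ) ^ q * 3 ^ d / ((5/2:ℝ) ^ d - (3/2:ℝ) ^ d) with hD
  refine ⟨max 1 D, lt_of_lt_of_le one_pos (le_max_left _ _), ?_⟩
  intro u hu x y s hs
  set A : Set (EuclideanSpace ℝ (Fin d)) := {h | s ≤ ‖h‖ ∧ ‖h‖ ≤ 3 * s} with hAdef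
  set fx : EuclideanSpace ℝ (Fin d) → ℝ := fun h => min 1 (|u (x + h) - u x| ^ q) with hfx
  set fy : EuclideanSpace ℝ (Fin d) → ℝ := fun h => min 1 (|u (y + h) - u y| ^ q) with hfy
  -- nonnegativity and boundedness
  have h0x : ∀ h, 0 ≤ fx h := fun h => le_min zero_le_one (Real.rpow_nonneg (abs_nonneg _) q)
  have h0y : ∀ h, 0 ≤ fy h := fun h => le_min zero_le_one (Real.rpow_nonneg (abs_nonneg _) q)
  have h1x : ∀ h, fx h ≤ 1 := fun h => min_le_left _ _
  have h1y : ∀ h, fy h ≤ 1 := fun h => min_le_left _ _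
  -- A is measurable
  have hA : A = closedBall (0 : EuclideanSpace ℝ (Fin d)) (3*s) \ ball 0 s := by
    ext h
    simp [hAdef, mem_closedBall_zero_iff, mem_ball_zero_iff, not_lt, and_comm]
  have hAmeas : MeasurableSet A := by
    rw [hA]; exact measurableSet_closedBall.diff measurableSet_ball
  -- averages are nonneg
  have havgx : 0 ≤ ⨍ h in A, fx h := by
    rw [setAverage_eq volume fx A]
    exact smul_nonneg (by positivity) (setIntegral_nonneg hAmeas fun h _ => h0x h)
  have havgy : 0 ≤ ⨍ h in A, fy h := by
    rw [setAverage_eq volume fy A]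
    exact smul_nonneg (by positivity) (setIntegral_nonneg hAmeas fun h _ => h0y h)
  have hC1 : (1:ℝ) ≤ max 1 D := le_max_left _ _
  rcases eq_or_ne x y with rfl | hxy
  · rw [sub_self, abs_zero, Real.zero_rpow hq.ne', min_eq_right zero_le_one]
    exact mul_nonneg (by linarith) (add_nonneg havgx havgy)
  -- main case
  haveI : Nontrivial (EuclideanSpace ℝ (Fin d)) := ⟨x, y, hxy⟩
  have hd : 0 < d := by
    have := Module.finrank_pos (R := ℝ) (M := EuclideanSpace ℝ (Fin d))
    rwa [finrank_euclideanSpace_fin] at this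
  have hdxy : 0 < dist x y := dist_pos.mpr hxy
  have hs0 : 0 < s := by linarith
  set c : EuclideanSpace ℝ (Fin d) := x - y with hcdef
  have hc : ‖c‖ ≤ s / 2 := by
    have : ‖c‖ = dist x y := (dist_eq_norm x y).symm
    linarith [dist_nonneg (x := x) (y := y)]
  set B : Set (EuclideanSpace ℝ (Fin d)) :=
    closedBall (0 : EuclideanSpace ℝ (Fin d)) (5/2*s) \ closedBall 0 (3/2*s) with hBdef
  have hBmeas : MeasurableSet B := measurableSet_closedBall.diff measurableSet_closedBall
  have hBA : B ⊆ A := by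
    rintro h ⟨h1, h2⟩
    rw [mem_closedBall_zero_iff] at h1
    rw [mem_closedBall_zero_iff] at h2
    push_neg at h2
    rw [hAdef]
    exact ⟨by linarith, by linarith⟩
  have hBcA : ∀ h ∈ B, h + c ∈ A := by
    rintro h ⟨h1, h2⟩
    rw [mem_closedBall_zero_iff] at h1
    rw [mem_closedBall_zero_iff] at h2
    push_neg at h2
    have e1 : ‖h + c‖ ≤ ‖h‖ + ‖c‖ := norm_add_le _ _
    have e2 : ‖h‖ - ‖c‖ ≤ ‖h + c‖ := by
      have := norm_add_le (h + c) (-c)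
      simp only [add_neg_cancel_right, norm_neg] at this
      linarith
    rw [hAdef]
    exact ⟨by linarith, by linarith⟩
  -- measures
  set κ := volume (ball (0 : EuclideanSpace ℝ (Fin d)) 1) with hκdef
  have hκpos : 0 < κ := measure_ball_pos _ _ one_pos
  have hκlt : κ < ⊤ := measure_ball_lt_top
  set kR := κ.toReal with hkRdef
  have hkR : 0 < kR := ENNReal.toReal_pos hκpos.ne' hκlt.ne
  have hcb : ∀ r : ℝ, 0 ≤ r →
      volume (closedBall (0 : EuclideanSpace ℝ (Fin d)) r) = ENNReal.ofReal (r ^ d) * κ := by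
    intro r hr
    rw [Measure.addHaar_closedBall volume 0 hr, finrank_euclideanSpace_fin]
  have hAsub : A ⊆ closedBall (0 : EuclideanSpace ℝ (Fin d)) (3*s) := by
    rw [hA]; exact diff_subset
  have hAfin : volume A < ⊤ :=
    lt_of_le_of_lt (measure_mono hAsub) measure_closedBall_lt_top
  set vA := (volume A).toReal with hvAdef
  have hvA : vA ≤ (3*s) ^ d * kR := by
    have h1 : volume A ≤ ENNReal.ofReal ((3*s) ^ d) * κ := by
      rw [← hcb (3*s) (by positivity)]
      exact measure_mono hAsub
    have h2 := ENNReal.toReal_mono (ENNReal.mul_lt_top ENNReal.ofReal_lt_top hκlt).ne h1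
    rwa [ENNReal.toReal_mul, ENNReal.toReal_ofReal (by positivity)] at h2
  have hvolB : volume B = ENNReal.ofReal ((5/2*s) ^ d) * κ - ENNReal.ofReal ((3/2*s) ^ d) * κ := by
    rw [hBdef, measure_diff (closedBall_subset_closedBall (by linarith))
      measurableSet_closedBall.nullMeasurableSet measure_closedBall_lt_top.ne,
      hcb _ (by positivity), hcb _ (by positivity)]
  set vB := (volume B).toReal with hvBdef
  have hvB : vB = ((5/2*s) ^ d - (3/2*s) ^ d) * kR := by
    have hle : ENNReal.ofReal ((3/2*s) ^ d) * κ ≤ ENNReal.ofReal ((5/2*s) ^ d) * κ :=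
      mul_le_mul_left (ENNReal.ofReal_le_ofReal
        (pow_le_pow_left₀ (by positivity) (by linarith) d)) κ
    rw [hvBdef, hvolB, ENNReal.toReal_sub_of_le hle
      (ENNReal.mul_lt_top ENNReal.ofReal_lt_top hκlt).ne,
      ENNReal.toReal_mul, ENNReal.toReal_mul,
      ENNReal.toReal_ofReal (by positivity), ENNReal.toReal_ofReal (by positivity)]
    ring
  have hpowlt : (3/2*s) ^ d < (5/2*s) ^ d := by
    apply pow_lt_pow_left₀ (by linarith) (by positivity) hd.ne'
  have hvBpos : 0 < vB := by rw [hvB]; nlinarith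
  have hvBA : vB ≤ vA := ENNReal.toReal_mono hAfin.ne (measure_mono hBA)
  have hvApos : 0 < vA := lt_of_lt_of_le hvBpos hvBA
  -- measurability of integrands
  have hφc : Continuous (fun t : ℝ => min 1 (|t| ^ q)) :=
    continuous_const.min ((continuous_abs).rpow_const fun _ => Or.inr hq.le)
  have hmeas : ∀ z : EuclideanSpace ℝ (Fin d),
      AEStronglyMeasurable (fun h => min 1 (|u (z + h) - u z| ^ q)) volume := by
    intro z
    exact hφc.comp_aestronglyMeasurable
      ((hu.aestronglyMeasurable.comp_quasiMeasurePreserving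
        (measurePreserving_add_left volume z).quasiMeasurePreserving).sub
        aestronglyMeasurable_const)
  have hmx : AEStronglyMeasurable fx volume := hmeas x
  have hmy : AEStronglyMeasurable fy volume := hmeas y
  set g : EuclideanSpace ℝ (Fin d) → ℝ := fun h => fy (h + c) with hgdef
  have hmg : AEStronglyMeasurable g volume :=
    hmy.comp_quasiMeasurePreserving (measurePreserving_add_right volume c).quasiMeasurePreserving
  have h0g : ∀ h, 0 ≤ g h := fun h => h0y _
  have h1g : ∀ h, g h ≤ 1 := fun h => h1y _
  -- integrability helper
  have hint : ∀ (S : Set (EuclideanSpace ℝ (Fin d))), MeasurableSet S → volume S < ⊤ →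
      ∀ (f : EuclideanSpace ℝ (Fin d) → ℝ), AEStronglyMeasurable f volume →
      (∀ h, 0 ≤ f h) → (∀ h, f h ≤ 1) → IntegrableOn f S volume := by
    intro S _ hSf f hf h0 h1
    refine Integrable.mono' (g := fun _ => (1:ℝ)) (integrableOn_const hSf.ne) hf.restrict ?_
    filter_upwards with h
    rw [Real.norm_eq_abs, abs_of_nonneg (h0 h)]
    exact h1 h
  have hBfin : volume B < ⊤ := lt_of_le_of_lt (measure_mono hBA) hAfin
  set T : Set (EuclideanSpace ℝ (Fin d)) := (fun h => h + c) ⁻¹' A with hTdef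
  have hTmeas : MeasurableSet T := hAmeas.preimage (measurable_add_const c)
  have hTvol : volume T = volume A :=
    (measurePreserving_add_right volume c).measure_preimage hAmeas.nullMeasurableSet
  have hTfin : volume T < ⊤ := by rw [hTvol]; exact hAfin
  have hIfxB : IntegrableOn fx B volume := hint B hBmeas hBfin fx hmx h0x h1x
  have hIgB : IntegrableOn g B volume := hint B hBmeas hBfin g hmg h0g h1g
  have hIfxA : IntegrableOn fx A volume := hint A hAmeas hAfin fx hmx h0x h1x
  have hIgT : IntegrableOn g T volume := hint T hTmeas hTfin g hmg h0g h1g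
  set M := min 1 (|u x - u y| ^ q) with hM
  -- key pointwise estimate
  have key : ∀ h : EuclideanSpace ℝ (Fin d), M ≤ 2 ^ q * (fx h + g h) := by
    intro h
    have e1 : y + (h + c) = x + h := by rw [hcdef]; abel
    have h2 := min_one_tri q hq (u x - u (x + h)) (u (x + h) - u y)
    rw [sub_add_sub_cancel, abs_sub_comm (u x) (u (x + h))] at h2
    simpa only [hM, hfx, hfy, hgdef, e1] using h2
  -- integrate over B
  have hIB : M * vB ≤ 2 ^ q * ((∫ h in B, fx h) + ∫ h in B, g h) := by
    have e1 : ∫ _ in B, M ∂volume = vB * M := by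
      rw [setIntegral_const, smul_eq_mul, hvBdef, measureReal_def]
    have e2 : (∫ h in B, (2:ℝ) ^ q * (fx h + g h)) =
        2 ^ q * ((∫ h in B, fx h) + ∫ h in B, g h) := by
      rw [integral_const_mul, integral_add hIfxB hIgB]
    have e3 : (∫ _ in B, M ∂volume) ≤ ∫ h in B, (2:ℝ) ^ q * (fx h + g h) := by
      apply setIntegral_mono_on (hint B hBmeas hBfin (fun _ => M)
        aestronglyMeasurable_const (fun _ => le_min zero_le_one
          (Real.rpow_nonneg (abs_nonneg _) q)) (fun _ => min_le_left _ _))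
        ((hIfxB.add hIgB).const_mul _) hBmeas
      intro h _
      exact key h
    calc M * vB = ∫ _ in B, M ∂volume := by rw [e1, mul_comm]
      _ ≤ ∫ h in B, (2:ℝ) ^ q * (fx h + g h) := e3
      _ = 2 ^ q * ((∫ h in B, fx h) + ∫ h in B, g h) := e2
  have hfxBA : (∫ h in B, fx h) ≤ ∫ h in A, fx h :=
    setIntegral_mono_set hIfxA (Filter.Eventually.of_forall h0x)
      (HasSubset.Subset.eventuallyLE hBA)
  have hBT : B ⊆ T := fun h hh => hBcA h hh
  have hgBT : (∫ h in B, g h) ≤ ∫ h in T, g h :=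
    setIntegral_mono_set hIgT (Filter.Eventually.of_forall h0g)
      (HasSubset.Subset.eventuallyLE hBT)
  have hgT : (∫ h in T, g h) = ∫ h in A, fy h := by
    rw [hTdef, hgdef]
    exact (measurePreserving_add_right volume c).setIntegral_preimage_emb
      (MeasurableEquiv.addRight c).measurableEmbedding fy A
  have htotal : M * vB ≤ 2 ^ q * ((∫ h in A, fx h) + ∫ h in A, fy h) := by
    have h2q0 : (0:ℝ) ≤ 2 ^ q := Real.rpow_nonneg (by norm_num) q
    calc M * vB ≤ 2 ^ q * ((∫ h in B, fx h) + ∫ h in B, g h) := hIB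
      _ ≤ 2 ^ q * ((∫ h in A, fx h) + ∫ h in A, fy h) := by
          apply mul_le_mul_of_nonneg_left _ h2q0
          rw [← hgT]
          exact add_le_add hfxBA hgBT
  -- averages
  have hIAx : (∫ h in A, fx h) = vA * ⨍ h in A, fx h := by
    rw [setAverage_eq volume fx A, measureReal_def, smul_eq_mul, ← mul_assoc, hvAdef,
      mul_inv_cancel₀ hvApos.ne', one_mul]
  have hIAy : (∫ h in A, fy h) = vA * ⨍ h in A, fy h := by
    rw [setAverage_eq volume fy A, measureReal_def, smul_eq_mul, ← mul_assoc, hvAdef,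
      mul_inv_cancel₀ hvApos.ne', one_mul]
  rw [hIAx, hIAy] at htotal
  -- final arithmetic
  have hratio : 2 ^ q * vA / vB ≤ max 1 D := by
    refine le_trans ?_ (le_max_right 1 D)
    have h2q0 : (0:ℝ) ≤ 2 ^ q := Real.rpow_nonneg (by norm_num) q
    have hnum : 2 ^ q * vA ≤ 2 ^ q * ((3*s) ^ d * kR) := by
      apply mul_le_mul_of_nonneg_left hvA h2q0
    have hdpos : (0:ℝ) < ((5/2*s) ^ d - (3/2*s) ^ d) * kR := by rw [← hvB]; exact hvBpos
    have : 2 ^ q * vA / vB ≤ 2 ^ q * ((3*s) ^ d * kR) / (((5/2*s) ^ d - (3/2*s) ^ d) * kR) := by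
      apply div_le_div₀ (by positivity) hnum hdpos (le_of_eq hvB.symm)
    refine this.trans (le_of_eq ?_)
    have hdenpos : (0:ℝ) < (5/2:ℝ) ^ d - (3/2:ℝ) ^ d := by
      have : ((3/2:ℝ)) ^ d < (5/2:ℝ) ^ d :=
        pow_lt_pow_left₀ (by norm_num) (by norm_num) hd.ne'
      linarith
    rw [hD, div_eq_div_iff hdpos.ne' hdenpos.ne']
    rw [mul_pow, mul_pow, mul_pow]
    ring
  have hsum : 0 ≤ (⨍ h in A, fx h) + ⨍ h in A, fy h := add_nonneg havgx havgy
  have hfinal : M ≤ (2 ^ q * vA / vB) * ((⨍ h in A, fx h) + ⨍ h in A, fy h) := by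
    rw [div_mul_eq_mul_div, le_div_iff₀ hvBpos]
    calc M * vB ≤ 2 ^ q * (vA * (⨍ h in A, fx h) + vA * ⨍ h in A, fy h) := htotal
      _ = 2 ^ q * vA * ((⨍ h in A, fx h) + ⨍ h in A, fy h) := by ring
  exact hfinal.trans (mul_le_mul_of_nonneg_right hratio hsum)
end

section
/- For every p > 1 and all ν, t > 0 with νt ≤ 1, the inequality log(1/(νt)+e) / log( log((νt)^{-1}+e)^{1/2}/√(νt) + 2 )^p ≤ 2^p / log(1/(νt)+4)^{p-1} holds; in particular log(1/(νt)+e)/log(1/√(νt)+2)^p ≤ 2^p/log(1/(νt)+4)^{p-1}. -/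
open Real

/-- the elementary logarithmic inequalities used in the choice of the
frequency cutoff in the dissipation estimate. -/
theorem stmt13 (p ν t : ℝ) (hp : 1 < p) (hν : 0 < ν) (ht : 0 < t) (h : ν * t ≤ 1) :
    Real.log (1/(ν*t) + Real.exp 1) /
        (Real.log (Real.sqrt (Real.log (1/(ν*t) + Real.exp 1)) / Real.sqrt (ν*t) + 2)) ^ p ≤
      (2:ℝ) ^ p / (Real.log (1/(ν*t) + 4)) ^ (p-1) ∧
    Real.log (1/(ν*t) + Real.exp 1) / (Real.log (1/Real.sqrt (ν*t) + 2)) ^ p ≤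
      (2:ℝ) ^ p / (Real.log (1/(ν*t) + 4)) ^ (p-1) := by
  set x := ν * t with hx
  have hx0 : 0 < x := mul_pos hν ht
  have hsx0 : 0 < Real.sqrt x := Real.sqrt_pos.mpr hx0
  have hsx1 : Real.sqrt x ≤ 1 := by
    nlinarith [Real.sq_sqrt hx0.le, Real.sqrt_nonneg x]
  have hinv1 : (1:ℝ) ≤ 1/x := by
    rw [le_div_iff₀ hx0]; linarith
  have hinvs1 : (1:ℝ) ≤ 1/Real.sqrt x := by
    rw [le_div_iff₀ hsx0]; linarith
  set A := Real.log (1/x + Real.exp 1) with hA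
  set B := Real.log (1/x + 4) with hB
  set C := Real.log (1/Real.sqrt x + 2) with hC
  have hA1 : 1 ≤ A := by
    have hx' : 0 < 1/x := by positivity
    have : Real.exp 1 ≤ 1/x + Real.exp 1 := by linarith
    calc (1:ℝ) = Real.log (Real.exp 1) := (Real.log_exp 1).symm
    _ ≤ A := Real.log_le_log (Real.exp_pos 1) this
  have hB0 : 0 < B := Real.log_pos (by linarith)
  have hC0 : 0 < C := Real.log_pos (by linarith)
  have hAB : A ≤ B := by
    apply Real.log_le_log (by positivity)
    have := Real.exp_one_lt_d9
    linarith
  -- key: B ≤ 2 * C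
  have hB2C : B ≤ 2 * C := by
    have h1 : (1/Real.sqrt x)^2 = 1/x := by
      rw [div_pow, one_pow, Real.sq_sqrt hx0.le]
    have hsq : (1/Real.sqrt x + 2)^2 = 1/x + 4/Real.sqrt x + 4 := by
      calc (1/Real.sqrt x + 2)^2 = (1/Real.sqrt x)^2 + 4*(1/Real.sqrt x) + 4 := by ring
      _ = 1/x + 4/Real.sqrt x + 4 := by rw [h1]; ring
    have : B ≤ Real.log ((1/Real.sqrt x + 2)^2) := by
      apply Real.log_le_log (by positivity)
      rw [hsq]
      have : 0 < 4/Real.sqrt x := by positivity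
      linarith
    calc B ≤ Real.log ((1/Real.sqrt x + 2)^2) := this
    _ = 2 * C := by simp [hC, Real.log_pow]
  have hp0 : (0:ℝ) ≤ p := by linarith
  -- second inequality
  have main : A / C ^ p ≤ (2:ℝ) ^ p / B ^ (p-1) := by
    rw [div_le_div_iff₀ (Real.rpow_pos_of_pos hC0 p) (Real.rpow_pos_of_pos hB0 (p-1))]
    have h1 : A * B ^ (p-1) ≤ B ^ p := by
      calc A * B ^ (p-1) ≤ B * B ^ (p-1) :=
            mul_le_mul_of_nonneg_right hAB (Real.rpow_nonneg hB0.le _)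
      _ = B ^ (1 + (p-1)) := by rw [Real.rpow_add hB0, Real.rpow_one]
      _ = B ^ p := by ring_nf
    have h2 : B ^ p ≤ (2*C) ^ p := Real.rpow_le_rpow hB0.le hB2C hp0
    have h3 : (2*C) ^ p = 2 ^ p * C ^ p := Real.mul_rpow (by norm_num) hC0.le
    calc A * B ^ (p-1) ≤ (2*C)^p := le_trans h1 h2
    _ = 2 ^ p * C ^ p := h3
  refine ⟨?_, main⟩
  -- first: denominator is larger
  set D := Real.log (Real.sqrt A / Real.sqrt x + 2) with hD
  have hCD : C ≤ D := by
    apply Real.log_le_log (by positivity)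
    have hsA : 1 ≤ Real.sqrt A := by
      rw [show (1:ℝ) = Real.sqrt 1 by simp]
      exact Real.sqrt_le_sqrt hA1
    have : 1/Real.sqrt x ≤ Real.sqrt A / Real.sqrt x := by gcongr
    linarith
  have hCpDp : C ^ p ≤ D ^ p := Real.rpow_le_rpow hC0.le hCD hp0
  have hDp0 : 0 < D ^ p := lt_of_lt_of_le (Real.rpow_pos_of_pos hC0 p) hCpDp
  calc A / D ^ p ≤ A / C ^ p := by
        apply div_le_div_of_nonneg_left (by linarith) (Real.rpow_pos_of_pos hC0 p) hCpDp
  _ ≤ _ := main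
end

section
/- Let g : T^d → [0,∞) be measurable with g ∈ L^p(T^d) for some p > 1. Then ∫_{T^d} ∫_{|h|<1/10} 1_{{|h|^{1/2} e^{2g(x)} ≥ 2}} / (|h|^d log(1/|h|)^{1-p}) dh dx ≤ C(p,d) ‖g‖_{L^p}^p. -/
open MeasureTheory Real ENNReal
open Measure Set Metric

lemma lintegral_fun_norm_addHaar' {E : Type*} [NormedAddCommGroup E] [NormedSpace ℝ E]
    [MeasurableSpace E] [BorelSpace E] [FiniteDimensional ℝ E] [Nontrivial E]
    (μ : Measure E) [μ.IsAddHaarMeasure] (f : ℝ → ℝ≥0∞) (hf : Measurable f) :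
    ∫⁻ x, f ‖x‖ ∂μ = (Module.finrank ℝ E : ℝ≥0∞) * μ (ball 0 1) *
      ∫⁻ y in Ioi (0:ℝ), ENNReal.ofReal (y ^ (Module.finrank ℝ E - 1)) * f y := by
  have h1 : ∫⁻ x, f ‖x‖ ∂μ = ∫⁻ x : ({(0:E)}ᶜ : Set E), f ‖x.1‖ ∂(μ.comap (↑)) := by
    rw [lintegral_subtype_comap (measurableSet_singleton (0:E)).compl (fun x => f ‖x‖),
      restrict_compl_singleton]
  rw [h1]
  have h2 : ∀ x : ({(0:E)}ᶜ : Set E), f ‖x.1‖ =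
      (fun q : sphere (0:E) 1 × Ioi (0:ℝ) => f q.2.1) (homeomorphUnitSphereProd E x) := by
    intro x; simp
  rw [lintegral_congr h2,
    μ.measurePreserving_homeomorphUnitSphereProd.lintegral_comp
      (f := fun q : sphere (0:E) 1 × Ioi (0:ℝ) => f q.2.1)
      (by exact (hf.comp measurable_subtype_coe).comp measurable_snd)]
  rw [lintegral_prod _ (by exact ((hf.comp measurable_subtype_coe).comp measurable_snd).aemeasurable)]
  simp only [lintegral_const]
  rw [Measure.toSphere_apply_univ, mul_comm]
  congr 1
  rw [Measure.volumeIoiPow,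
    lintegral_withDensity_eq_lintegral_mul (comap Subtype.val volume)
      (f := fun r : Ioi (0:ℝ) => ENNReal.ofReal (r.1 ^ (Module.finrank ℝ E - 1)))
      (by exact (measurable_subtype_coe.pow_const _).ennreal_ofReal)
      (g := fun y : Ioi (0:ℝ) => f y.1) (hf.comp measurable_subtype_coe)]
  exact lintegral_subtype_comap measurableSet_Ioi
      (fun y : ℝ => ENNReal.ofReal (y ^ (Module.finrank ℝ E - 1)) * f y)

lemma inner_bound (d : ℕ) (hd : 0 < d) (p : ℝ) (hp : 1 < p) (A : ℝ) (hA : 0 ≤ A) :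
    (∫⁻ h in Metric.ball (0 : EuclideanSpace ℝ (Fin d)) (1/10),
        (if (2:ℝ) ≤ ‖h‖ ^ ((1:ℝ)/2) * Real.exp (2 * A) then (1:ℝ≥0∞) else 0) /
          ENNReal.ofReal (‖h‖ ^ (d:ℝ) * (Real.log (1/‖h‖)) ^ (1 - p))) ≤
      ((d : ℝ≥0∞) * volume (Metric.ball (0 : EuclideanSpace ℝ (Fin d)) 1)) *
        ENNReal.ofReal ((4:ℝ)^p * A^p) := by
  haveI : Nonempty (Fin d) := Fin.pos_iff_nonempty.mp hd
  by_cases hA40 : A < (1/4) * Real.log 40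
  · -- integrand vanishes
    have hz : ∀ h ∈ Metric.ball (0 : EuclideanSpace ℝ (Fin d)) (1/10),
        ((if (2:ℝ) ≤ ‖h‖ ^ ((1:ℝ)/2) * Real.exp (2 * A) then (1:ℝ≥0∞) else 0) /
          ENNReal.ofReal (‖h‖ ^ (d:ℝ) * (Real.log (1/‖h‖)) ^ (1 - p))) = 0 := by
      intro h hh
      rw [mem_ball_zero_iff] at hh
      have h1 : ‖h‖ ^ ((1:ℝ)/2) * Real.exp (2 * A) < 2 := by
        have e1 : ‖h‖ ^ ((1:ℝ)/2) ≤ (1/10 : ℝ) ^ ((1:ℝ)/2) :=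
          Real.rpow_le_rpow (norm_nonneg _) hh.le (by norm_num)
        have e2 : Real.exp (2 * A) < Real.exp ((1/2) * Real.log 40) := by
          apply Real.exp_lt_exp.mpr; linarith
        have e3 : Real.exp ((1/2) * Real.log 40) = (40:ℝ) ^ ((1:ℝ)/2) := by
          rw [Real.rpow_def_of_pos (by norm_num : (0:ℝ) < 40)]; ring_nf
        have e4 : (1/10 : ℝ) ^ ((1:ℝ)/2) * (40:ℝ) ^ ((1:ℝ)/2) = 2 := by
          rw [← Real.mul_rpow (by norm_num) (by norm_num)]
          norm_num
        calc ‖h‖ ^ ((1:ℝ)/2) * Real.exp (2 * A)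
            ≤ (1/10 : ℝ) ^ ((1:ℝ)/2) * Real.exp (2 * A) := by
              exact mul_le_mul_of_nonneg_right e1 (Real.exp_pos _).le
          _ < (1/10 : ℝ) ^ ((1:ℝ)/2) * (40:ℝ) ^ ((1:ℝ)/2) := by
              rw [← e3]; exact mul_lt_mul_of_pos_left e2 (Real.rpow_pos_of_pos (by norm_num) _)
          _ = 2 := e4
      rw [if_neg (by linarith), ENNReal.zero_div]
    calc (∫⁻ h in Metric.ball (0 : EuclideanSpace ℝ (Fin d)) (1/10), _)
        = ∫⁻ _ in Metric.ball (0 : EuclideanSpace ℝ (Fin d)) (1/10), (0:ℝ≥0∞) := by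
          apply setLIntegral_congr_fun measurableSet_ball
          exact hz
      _ = 0 := lintegral_zero
      _ ≤ _ := zero_le
  · push_neg at hA40
    have hApos : 0 < A := lt_of_lt_of_le (by positivity) hA40
    set ρ : ℝ := 4 * Real.exp (-(4*A)) with hρ_def
    have hρ : 0 < ρ := by positivity
    have hρ10 : ρ ≤ 1/10 := by
      have : Real.exp (-(4*A)) ≤ Real.exp (-(Real.log 40)) := by
        apply Real.exp_le_exp.mpr; linarith
      have h40 : Real.exp (-(Real.log 40)) = 1/40 := by
        rw [Real.exp_neg, Real.exp_log (by norm_num : (0:ℝ) < 40)]; norm_num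
      rw [h40] at this
      rw [hρ_def]; linarith
    have hlogρ : Real.log ρ = Real.log 4 - 4*A := by
      rw [hρ_def, Real.log_mul (by norm_num) (Real.exp_ne_zero _), Real.log_exp]; ring
    set G : ℝ → ℝ≥0∞ := fun r =>
      if ρ ≤ r ∧ r < 1/10 then ENNReal.ofReal (r ^ (-(d:ℝ)) * (-Real.log r)^(p-1)) else 0
      with hG_def
    have hG : Measurable G := by
      apply Measurable.ite (measurableSet_Ico (a := ρ) (b := 1/10))
      · exact ((measurable_id.pow measurable_const).mul
          ((Real.measurable_log.neg).pow measurable_const)).ennreal_ofReal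
      · exact measurable_const
    -- pointwise bound on the ball
    have hFG : ∀ h ∈ Metric.ball (0 : EuclideanSpace ℝ (Fin d)) (1/10),
        ((if (2:ℝ) ≤ ‖h‖ ^ ((1:ℝ)/2) * Real.exp (2 * A) then (1:ℝ≥0∞) else 0) /
          ENNReal.ofReal (‖h‖ ^ (d:ℝ) * (Real.log (1/‖h‖)) ^ (1 - p))) ≤ G ‖h‖ := by
      intro h hh
      rw [mem_ball_zero_iff] at hh
      by_cases hc : (2:ℝ) ≤ ‖h‖ ^ ((1:ℝ)/2) * Real.exp (2 * A)
      · set r : ℝ := ‖h‖ with hr_def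
        have hr0 : 0 ≤ r := norm_nonneg _
        have hρr : ρ ≤ r := by
          have e1 : 2 * Real.exp (-(2*A)) ≤ r ^ ((1:ℝ)/2) := by
            rw [Real.exp_neg]
            rw [mul_inv_le_iff₀ (Real.exp_pos _)]
            linarith [hc]
          have e2 : (2 * Real.exp (-(2*A)))^(2:ℕ) ≤ (r ^ ((1:ℝ)/2))^(2:ℕ) :=
            pow_le_pow_left₀ (by positivity) e1 2
          have e3 : (r ^ ((1:ℝ)/2))^(2:ℕ) = r := by
            rw [← Real.rpow_natCast (r ^ ((1:ℝ)/2)) 2, ← Real.rpow_mul hr0]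
            norm_num
          have e4 : (2 * Real.exp (-(2*A)))^(2:ℕ) = ρ := by
            rw [hρ_def, mul_pow, ← Real.exp_nat_mul]
            norm_num
            ring
          rw [e3, e4] at e2
          exact e2
        have hrpos : 0 < r := lt_of_lt_of_le hρ hρr
        have hr1 : r < 1 := lt_trans hh (by norm_num)
        have hL : 0 < Real.log (1/r) := by
          rw [one_div, Real.log_inv]
          simpa using Real.log_neg hrpos hr1
        have hzpos : 0 < r ^ (d:ℝ) * (Real.log (1/r)) ^ (1 - p) :=
          mul_pos (Real.rpow_pos_of_pos hrpos _) (Real.rpow_pos_of_pos hL _)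
        have key : (1:ℝ≥0∞) / ENNReal.ofReal (r ^ (d:ℝ) * (Real.log (1/r)) ^ (1 - p))
            = ENNReal.ofReal (r ^ (-(d:ℝ)) * (-Real.log r)^(p-1)) := by
          rw [one_div, ← ENNReal.ofReal_inv_of_pos hzpos]
          congr 1
          rw [mul_inv, ← Real.rpow_neg hr0, ← Real.rpow_neg hL.le, neg_sub]
          rw [one_div, Real.log_inv]
        rw [if_pos hc, key, hG_def]
        simp only []
        rw [if_pos ⟨hρr, hh⟩]
      · rw [if_neg hc, ENNReal.zero_div]
        exact zero_le
    have hstep3 : ∫⁻ y in Ioi (0:ℝ), ENNReal.ofReal (y ^ (d - 1)) * G y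
        ≤ ENNReal.ofReal ((4:ℝ)^p * A^p) := by
      set c : ℝ := (4*A)^(p-1) with hc_def
      have hc0 : 0 ≤ c := Real.rpow_nonneg (by positivity) _
      have hpt : ∀ y ∈ Ioi (0:ℝ), ENNReal.ofReal (y ^ (d - 1)) * G y
          ≤ (Ico ρ (1/10)).indicator (fun y => ENNReal.ofReal (c * y⁻¹)) y := by
        intro y hy
        rw [mem_Ioi] at hy
        by_cases hmem : ρ ≤ y ∧ y < 1/10
        · have hind : (Ico ρ (1/10)).indicator (fun y => ENNReal.ofReal (c * y⁻¹)) y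
              = ENNReal.ofReal (c * y⁻¹) := Set.indicator_of_mem (mem_Ico.mpr hmem) _
          rw [hind, hG_def]
          simp only []
          rw [if_pos hmem, ← ENNReal.ofReal_mul (by positivity)]
          apply ENNReal.ofReal_le_ofReal
          have hy1 : y < 1 := lt_trans hmem.2 (by norm_num)
          have hlogy : 0 ≤ -Real.log y := by simpa using (Real.log_neg hy hy1).le
          have hlog4A : -Real.log y ≤ 4*A := by
            have hll := Real.log_le_log hρ hmem.1
            rw [hlogρ] at hll
            have h4 : 0 ≤ Real.log 4 := Real.log_nonneg (by norm_num)
            linarith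
          have hpow : (-Real.log y)^(p-1) ≤ c := by
            rw [hc_def]; exact Real.rpow_le_rpow hlogy hlog4A (by linarith)
          have hyd : y ^ (d - 1) * y ^ (-(d:ℝ)) = y⁻¹ := by
            rw [← Real.rpow_natCast y (d-1), Nat.cast_sub hd, Nat.cast_one, ← Real.rpow_add hy,
              show (d:ℝ) - 1 + -(d:ℝ) = -1 by ring, Real.rpow_neg_one]
          calc y ^ (d - 1) * (y ^ (-(d:ℝ)) * (-Real.log y)^(p-1))
              = (y ^ (d - 1) * y ^ (-(d:ℝ))) * (-Real.log y)^(p-1) := by ring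
            _ = y⁻¹ * (-Real.log y)^(p-1) := by rw [hyd]
            _ ≤ y⁻¹ * c := mul_le_mul_of_nonneg_left hpow (by positivity)
            _ = c * y⁻¹ := mul_comm _ _
        · rw [hG_def]
          simp only []
          rw [if_neg hmem, mul_zero]
          exact zero_le
      have hInt : IntegrableOn (fun y => c * y⁻¹) (Ioc ρ (1/10)) volume := by
        have h1 : IntervalIntegrable (fun y:ℝ => y⁻¹) volume ρ (1/10) := by
          apply intervalIntegral.intervalIntegrable_inv
          · intro x hx
            rw [uIcc_of_le hρ10] at hx
            exact ne_of_gt (lt_of_lt_of_le hρ hx.1)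
          · exact continuousOn_id
        have h2 : IntegrableOn (fun y:ℝ => y⁻¹) (Ioc ρ (1/10)) volume := by
          rw [← intervalIntegrable_iff_integrableOn_Ioc_of_le hρ10]
          exact h1
        exact h2.const_mul c
      have hnn : 0 ≤ᵐ[volume.restrict (Ioc ρ (1/10))] fun y => c * y⁻¹ := by
        filter_upwards [ae_restrict_mem measurableSet_Ioc] with y hy
        have hy0 : 0 < y := lt_of_le_of_lt hρ.le hy.1
        positivity
      have hfinal : (∫ y in Ioc ρ (1/10), c * y⁻¹) ≤ (4:ℝ)^p * A^p := by
        have e1 : (∫ y in Ioc ρ (1/10), c * y⁻¹) = c * Real.log ((1/10)/ρ) := by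
          rw [← intervalIntegral.integral_of_le hρ10, intervalIntegral.integral_const_mul,
            integral_inv_of_pos hρ (by norm_num)]
        rw [e1]
        have e2 : Real.log ((1/10)/ρ) ≤ 4*A := by
          rw [Real.log_div (by norm_num) (ne_of_gt hρ), hlogρ]
          have hl10 : Real.log (1/10 : ℝ) ≤ 0 := Real.log_nonpos (by norm_num) (by norm_num)
          have h4 : 0 ≤ Real.log 4 := Real.log_nonneg (by norm_num)
          linarith
        have e3 : c * (4*A) = (4:ℝ)^p * A^p := by
          rw [hc_def]
          have e4 : (4*A)^(p-1) * (4*A) = (4*A)^p := by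
            nth_rewrite 2 [← Real.rpow_one (4*A)]
            rw [← Real.rpow_add (by positivity)]
            norm_num
          rw [e4, Real.mul_rpow (by norm_num) hA]
        calc c * Real.log ((1/10)/ρ) ≤ c * (4*A) := mul_le_mul_of_nonneg_left e2 hc0
          _ = _ := e3
      calc ∫⁻ y in Ioi (0:ℝ), ENNReal.ofReal (y ^ (d - 1)) * G y
          ≤ ∫⁻ y in Ioi (0:ℝ), (Ico ρ (1/10)).indicator (fun y => ENNReal.ofReal (c * y⁻¹)) y :=
            lintegral_mono_ae (by
              filter_upwards [ae_restrict_mem measurableSet_Ioi] with y hy using hpt y hy)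
        _ ≤ ∫⁻ y, (Ico ρ (1/10)).indicator (fun y => ENNReal.ofReal (c * y⁻¹)) y :=
            setLIntegral_le_lintegral _ _
        _ = ∫⁻ y in Ico ρ (1/10), ENNReal.ofReal (c * y⁻¹) :=
            lintegral_indicator measurableSet_Ico _
        _ = ∫⁻ y in Ioc ρ (1/10), ENNReal.ofReal (c * y⁻¹) := setLIntegral_congr Ico_ae_eq_Ioc
        _ = ENNReal.ofReal (∫ y in Ioc ρ (1/10), c * y⁻¹) :=
            (ofReal_integral_eq_lintegral_ofReal hInt hnn).symm
        _ ≤ ENNReal.ofReal ((4:ℝ)^p * A^p) := ENNReal.ofReal_le_ofReal hfinal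
    calc (∫⁻ h in Metric.ball (0 : EuclideanSpace ℝ (Fin d)) (1/10),
          (if (2:ℝ) ≤ ‖h‖ ^ ((1:ℝ)/2) * Real.exp (2 * A) then (1:ℝ≥0∞) else 0) /
            ENNReal.ofReal (‖h‖ ^ (d:ℝ) * (Real.log (1/‖h‖)) ^ (1 - p)))
        ≤ ∫⁻ h in Metric.ball (0 : EuclideanSpace ℝ (Fin d)) (1/10), G ‖h‖ :=
          lintegral_mono_ae (by
            filter_upwards [ae_restrict_mem measurableSet_ball] with h hh using hFG h hh)
      _ ≤ ∫⁻ h, G ‖h‖ := setLIntegral_le_lintegral _ _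
      _ = (d:ℝ≥0∞) * volume (Metric.ball (0 : EuclideanSpace ℝ (Fin d)) 1) *
            ∫⁻ y in Ioi (0:ℝ), ENNReal.ofReal (y ^ (d - 1)) * G y := by
          rw [lintegral_fun_norm_addHaar' volume G hG, finrank_euclideanSpace_fin]
      _ ≤ _ := mul_le_mul_right hstep3 _

/-- A fundamental domain for the torus `T^d = (ℝ/ℤ)^d`. -/
def torusBox (d : ℕ) : Set (EuclideanSpace ℝ (Fin d)) :=
  {x | ∀ i, x i ∈ Set.Ico (0:ℝ) 1}

/-- estimate of the "bad set" term by the `L^p` norm of `g`. -/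
theorem stmt14 (d : ℕ) (p : ℝ) (hp : 1 < p) :
    ∃ C : ℝ, 0 < C ∧
      ∀ g : EuclideanSpace ℝ (Fin d) → ℝ, Measurable g → (∀ x, 0 ≤ g x) →
        (∀ x i, g (x + EuclideanSpace.single i 1) = g x) →
        (∫⁻ x in torusBox d,
          ∫⁻ h in Metric.ball (0 : EuclideanSpace ℝ (Fin d)) (1/10),
            (if (2:ℝ) ≤ ‖h‖ ^ ((1:ℝ)/2) * Real.exp (2 * g x) then (1:ℝ≥0∞) else 0) /
              ENNReal.ofReal (‖h‖ ^ (d:ℝ) * (Real.log (1/‖h‖)) ^ (1 - p))) ≤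
        ENNReal.ofReal C * ∫⁻ x in torusBox d, ENNReal.ofReal (g x ^ p) := by
  rcases Nat.eq_zero_or_pos d with hd | hd
  · subst hd
    refine ⟨1, one_pos, fun g hg hg0 _ => ?_⟩
    have hz : ∀ x : EuclideanSpace ℝ (Fin 0),
        (∫⁻ h in Metric.ball (0 : EuclideanSpace ℝ (Fin 0)) (1/10),
          (if (2:ℝ) ≤ ‖h‖ ^ ((1:ℝ)/2) * Real.exp (2 * g x) then (1:ℝ≥0∞) else 0) /
            ENNReal.ofReal (‖h‖ ^ ((0:ℕ):ℝ) * (Real.log (1/‖h‖)) ^ (1 - p))) = 0 := by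
      intro x
      have : ∀ h : EuclideanSpace ℝ (Fin 0),
          ((if (2:ℝ) ≤ ‖h‖ ^ ((1:ℝ)/2) * Real.exp (2 * g x) then (1:ℝ≥0∞) else 0) /
            ENNReal.ofReal (‖h‖ ^ ((0:ℕ):ℝ) * (Real.log (1/‖h‖)) ^ (1 - p))) = 0 := by
        intro h
        have h0 : h = 0 := Subsingleton.elim _ _
        have hn : ‖h‖ = 0 := by rw [h0, norm_zero]
        rw [if_neg, ENNReal.zero_div]
        rw [hn, Real.zero_rpow (by norm_num : (1:ℝ)/2 ≠ 0), zero_mul]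
        norm_num
      simp only [this, lintegral_zero]
    calc (∫⁻ x in torusBox 0, _) = ∫⁻ _ in torusBox 0, (0:ℝ≥0∞) := by
          exact lintegral_congr fun x => hz x
      _ = 0 := lintegral_zero
      _ ≤ _ := zero_le
  · set V : ℝ≥0∞ := volume (Metric.ball (0 : EuclideanSpace ℝ (Fin d)) 1) with hV_def
    have hVtop : V ≠ ⊤ := measure_ball_lt_top.ne
    refine ⟨((d:ℝ) * V.toReal + 1) * (4:ℝ)^p, by positivity, fun g hg hg0 _ => ?_⟩
    have hK : (d:ℝ≥0∞) * V * ENNReal.ofReal ((4:ℝ)^p)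
        ≤ ENNReal.ofReal (((d:ℝ) * V.toReal + 1) * (4:ℝ)^p) := by
      rw [ENNReal.ofReal_mul (by positivity)]
      apply mul_le_mul_left
      have : (d:ℝ≥0∞) * V = ENNReal.ofReal ((d:ℝ) * V.toReal) := by
        rw [ENNReal.ofReal_mul (Nat.cast_nonneg d), ENNReal.ofReal_natCast,
          ENNReal.ofReal_toReal hVtop]
      rw [this]
      exact ENNReal.ofReal_le_ofReal (by linarith [ENNReal.toReal_nonneg (a := V)])
    calc (∫⁻ x in torusBox d,
          ∫⁻ h in Metric.ball (0 : EuclideanSpace ℝ (Fin d)) (1/10),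
            (if (2:ℝ) ≤ ‖h‖ ^ ((1:ℝ)/2) * Real.exp (2 * g x) then (1:ℝ≥0∞) else 0) /
              ENNReal.ofReal (‖h‖ ^ (d:ℝ) * (Real.log (1/‖h‖)) ^ (1 - p)))
        ≤ ∫⁻ x in torusBox d, ((d:ℝ≥0∞) * V) * ENNReal.ofReal ((4:ℝ)^p * g x ^ p) :=
          lintegral_mono fun x => inner_bound d hd p hp (g x) (hg0 x)
      _ = ∫⁻ x in torusBox d,
            ((d:ℝ≥0∞) * V * ENNReal.ofReal ((4:ℝ)^p)) * ENNReal.ofReal (g x ^ p) := by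
          apply lintegral_congr
          intro x
          rw [ENNReal.ofReal_mul (by positivity)]
          ring
      _ = ((d:ℝ≥0∞) * V * ENNReal.ofReal ((4:ℝ)^p)) *
            ∫⁻ x in torusBox d, ENNReal.ofReal (g x ^ p) := by
          apply lintegral_const_mul'
          exact ENNReal.mul_ne_top (ENNReal.mul_ne_top (ENNReal.natCast_ne_top d) hVtop)
            ENNReal.ofReal_ne_top
      _ ≤ _ := mul_le_mul_left hK _
end
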